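/- arXiv:2107.10318 — 5 statements merged into one kernel-verified Lean document; each statement's English description precedes it below -/
import Mathlib

section
/- The number of 4-tuples (a_1, a_2, a_3, a_4) of positive integers summing to N = 4m with a_1 ≥ a_2 ≥ a_3 ≥ a_4 and a_1 ≥ a_2 + a_3 + a_4, multiplied by 4!, is asymptotic to (1/2)·C(N-1, 3) as m → ∞; that is, the discrete probability that no 4-gon can be formed from 4 ordered pieces tends to 1/2. Formally: lim_{N→∞} 24·p_4(N,4)/C(N-1,3) = 1/2, where p_4(N,4) counts such 4-tuples. -/
section PNQCount
open Finset

/-! ### Auxiliary binomial identities -/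

lemma PNQ_two_choose (n : ℕ) : 2 * (n+1).choose 2 = (n+1)*n := by
  induction n with
  | zero => decide
  | succ k ih =>
    rw [show k+1+1 = (k+1)+1 from rfl, Nat.choose_succ_succ (k+1) 1]
    simp [Nat.choose_one_right, Nat.mul_add, ih]; ring

lemma PNQ_six_choose (n : ℕ) : 6 * (n+2).choose 3 = (n+2)*(n+1)*n := by
  induction n with
  | zero => decide
  | succ k ih =>
    rw [show k+1+2 = (k+2)+1 from rfl, Nat.choose_succ_succ (k+2) 2]
    have h2 : 2 * (k+2).choose 2 = (k+2)*(k+1) := PNQ_two_choose (k+1)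
    rw [Nat.mul_add]
    have : 6 * (k+2).choose 2 = 3 * ((k+2)*(k+1)) := by omega
    rw [ih, this]; ring

lemma PNQ_choose3_cast (n : ℕ) (h : 2 ≤ n) :
    ((n.choose 3 : ℕ) : ℝ) = (n:ℝ)*((n:ℝ)-1)*((n:ℝ)-2)/6 := by
  obtain ⟨k, rfl⟩ : ∃ k, n = k + 2 := ⟨n - 2, by omega⟩
  have h6 := PNQ_six_choose k
  have hr : ((6 * (k+2).choose 3 : ℕ) : ℝ) = (((k+2)*(k+1)*k : ℕ) : ℝ) := by rw [h6]
  push_cast at hr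
  push_cast
  ring_nf at hr ⊢
  linarith

/-! ### Counting finsets -/

def PNQ_V2 (M : ℕ) : Finset (ℕ × ℕ) :=
  (range (M+1) ×ˢ range (M+1)).filter fun p => 1 ≤ p.2 ∧ p.2 < p.1

def PNQ_V3 (M : ℕ) : Finset (ℕ × ℕ × ℕ) :=
  (range (M+1) ×ˢ range (M+1) ×ˢ range (M+1)).filter fun p =>
    1 ≤ p.2.2 ∧ p.2.2 < p.2.1 ∧ p.2.1 < p.1

lemma PNQ_V2_card (M : ℕ) : (PNQ_V2 M).card = M.choose 2 := by
  induction M with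
  | zero => decide
  | succ k ih =>
    have hsplit : PNQ_V2 (k+1) = PNQ_V2 k ∪ ({k+1} ×ˢ (range (k+1)).filter fun w => 1 ≤ w) := by
      ext p
      simp only [PNQ_V2, mem_union, mem_filter, mem_product, mem_range, mem_singleton]
      omega
    have hdisj : Disjoint (PNQ_V2 k) ({k+1} ×ˢ (range (k+1)).filter fun w => 1 ≤ w) := by
      rw [Finset.disjoint_left]
      intro p hp hp2
      simp only [PNQ_V2, mem_filter, mem_product, mem_range] at hp
      simp only [mem_product, mem_singleton] at hp2
      omega
    have hc : ((range (k+1)).filter fun w => 1 ≤ w).card = k := by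
      have : (range (k+1)).filter (fun w => 1 ≤ w) = Finset.Ioo 0 (k+1) := by
        ext w; simp; omega
      rw [this]; simp
    rw [hsplit, Finset.card_union_of_disjoint hdisj, ih, Finset.card_product, hc,
      Nat.choose_succ_succ k 1]
    simp [Nat.choose_one_right]; omega

lemma PNQ_V3_card (M : ℕ) : (PNQ_V3 M).card = M.choose 3 := by
  induction M with
  | zero => decide
  | succ k ih =>
    have hsplit : PNQ_V3 (k+1) = PNQ_V3 k ∪ ({k+1} ×ˢ PNQ_V2 k) := by
      ext p
      simp only [PNQ_V3, PNQ_V2, mem_union, mem_filter, mem_product, mem_range, mem_singleton]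
      omega
    have hdisj : Disjoint (PNQ_V3 k) ({k+1} ×ˢ PNQ_V2 k) := by
      rw [Finset.disjoint_left]
      intro p hp hp2
      simp only [PNQ_V3, mem_filter, mem_product, mem_range] at hp
      simp only [PNQ_V2, mem_product, mem_singleton] at hp2
      omega
    rw [hsplit, Finset.card_union_of_disjoint hdisj, ih, Finset.card_product, PNQ_V2_card,
      Nat.choose_succ_succ k 2]
    simp; omega

def PNQ_U (N : ℕ) : Finset (ℕ × ℕ × ℕ) :=
  (range (N+1) ×ˢ range (N+1) ×ˢ range (N+1)).filter fun p =>
    1 ≤ p.1 ∧ 1 ≤ p.2.1 ∧ 1 ≤ p.2.2 ∧ 2*(p.1+p.2.1+p.2.2) ≤ N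

def PNQ_Tt (N : ℕ) : Finset (ℕ × ℕ × ℕ) :=
  (PNQ_U N).filter fun p => p.2.2 ≤ p.2.1 ∧ p.2.1 ≤ p.1

lemma PNQ_U_card (N : ℕ) : (PNQ_U N).card = (PNQ_V3 (N/2)).card := by
  apply Finset.card_bij' (fun p _ => (p.1+p.2.1+p.2.2, p.2.1+p.2.2, p.2.2))
    (fun q _ => (q.1-q.2.1, q.2.1-q.2.2, q.2.2)) <;>
    rintro ⟨x, y, z⟩ hp <;>
    simp only [PNQ_U, PNQ_V3, Prod.mk.injEq, mem_filter, mem_product, mem_range, and_true, true_and] at hp ⊢ <;>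
    omega

def PNQ_permApply (i : Fin 6) (p : ℕ × ℕ × ℕ) : ℕ × ℕ × ℕ :=
  match i with
  | 0 => (p.1, p.2.1, p.2.2)
  | 1 => (p.1, p.2.2, p.2.1)
  | 2 => (p.2.1, p.1, p.2.2)
  | 3 => (p.2.1, p.2.2, p.1)
  | 4 => (p.2.2, p.1, p.2.1)
  | 5 => (p.2.2, p.2.1, p.1)

lemma PNQ_U_subset (N : ℕ) :
    PNQ_U N ⊆ (univ : Finset (Fin 6)).biUnion (fun i => (PNQ_Tt N).image (PNQ_permApply i)) := by
  rintro ⟨x, y, z⟩ hq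
  simp only [PNQ_U, mem_filter, mem_product, mem_range] at hq
  simp only [mem_biUnion, mem_univ, mem_image, true_and]
  have mem : ∀ u v w : ℕ, w ≤ v → v ≤ u → 1 ≤ w → 2*(u+v+w) ≤ N → u ≤ N → v ≤ N → w ≤ N →
      (u, v, w) ∈ PNQ_Tt N := by
    intro u v w h1 h2 h3 h4 h5 h6 h7
    simp only [PNQ_Tt, PNQ_U, mem_filter, mem_product, mem_range]
    omega
  rcases le_total x y with hxy|hxy <;> rcases le_total y z with hyz|hyz <;>
    rcases le_total x z with hxz|hxz
  · exact ⟨5, (z, y, x), mem z y x hxy hyz (by omega) (by omega) (by omega) (by omega) (by omega), rfl⟩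
  · exact ⟨5, (z, y, x), mem z y x hxy hyz (by omega) (by omega) (by omega) (by omega) (by omega), rfl⟩
  · exact ⟨4, (y, z, x), mem y z x hxz hyz (by omega) (by omega) (by omega) (by omega) (by omega), rfl⟩
  · exact ⟨2, (y, x, z), mem y x z hxz hxy (by omega) (by omega) (by omega) (by omega) (by omega), rfl⟩
  · exact ⟨3, (z, x, y), mem z x y hxy hxz (by omega) (by omega) (by omega) (by omega) (by omega), rfl⟩
  · exact ⟨1, (x, z, y), mem x z y hyz hxz (by omega) (by omega) (by omega) (by omega) (by omega), rfl⟩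
  · exact ⟨0, (x, y, z), mem x y z hyz hxy (by omega) (by omega) (by omega) (by omega) (by omega), rfl⟩
  · exact ⟨0, (x, y, z), mem x y z hyz hxy (by omega) (by omega) (by omega) (by omega) (by omega), rfl⟩

lemma PNQ_U_le (N : ℕ) : (PNQ_U N).card ≤ 6 * (PNQ_Tt N).card := by
  calc (PNQ_U N).card
      ≤ ((univ : Finset (Fin 6)).biUnion
          (fun i => (PNQ_Tt N).image (PNQ_permApply i))).card :=
        Finset.card_le_card (PNQ_U_subset N)
    _ ≤ ∑ i : Fin 6, ((PNQ_Tt N).image (PNQ_permApply i)).card :=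
        Finset.card_biUnion_le
    _ ≤ ∑ _i : Fin 6, (PNQ_Tt N).card :=
        Finset.sum_le_sum (fun i _ => Finset.card_image_le)
    _ = 6 * (PNQ_Tt N).card := by simp [Finset.sum_const, mul_comm]

def PNQ_Dst (N : ℕ) : Finset (ℕ × ℕ × ℕ) :=
  (PNQ_Tt N).filter fun p => p.2.2 < p.2.1 ∧ p.2.1 < p.1

set_option maxHeartbeats 2000000 in
lemma PNQ_six_Dst_le (N : ℕ) : 6 * (PNQ_Dst N).card ≤ (PNQ_U N).card := by
  have key : ((PNQ_Dst N) ×ˢ (univ : Finset (Fin 6))).card ≤ (PNQ_U N).card := by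
    apply Finset.card_le_card_of_injOn (fun q => PNQ_permApply q.2 q.1)
    · rintro ⟨⟨x, y, z⟩, i⟩ hq
      simp only [mem_product, PNQ_Dst, PNQ_Tt, PNQ_U, mem_filter, mem_range, mem_univ,
        and_true, mem_coe] at hq
      fin_cases i <;>
        simp only [PNQ_permApply, PNQ_U, mem_filter, mem_product, mem_range, mem_coe] <;> omega
    · rintro ⟨⟨x, y, z⟩, i⟩ hq ⟨⟨x', y', z'⟩, j⟩ hq' heq
      simp only [coe_product, Set.mem_prod, mem_coe, PNQ_Dst, PNQ_Tt, PNQ_U, mem_filter,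
        mem_product, mem_range, mem_univ, and_true] at hq hq'
      fin_cases i <;> fin_cases j <;>
        simp only [PNQ_permApply, Prod.mk.injEq] at heq <;>
        simp only [Prod.mk.injEq, Fin.mk.injEq, and_true] <;>
        omega
  calc 6 * (PNQ_Dst N).card = ((PNQ_Dst N) ×ˢ (univ : Finset (Fin 6))).card := by
        simp [Finset.card_product, mul_comm]
    _ ≤ (PNQ_U N).card := key

lemma PNQ_Tt_le (N : ℕ) : 6 * (PNQ_Tt N).card ≤ (PNQ_U N).card + 12 * (N+1)^2 := by
  have hsplit : (PNQ_Tt N).card ≤ (PNQ_Dst N).card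
      + ((PNQ_Tt N).filter (fun p => p.1 = p.2.1)).card
      + ((PNQ_Tt N).filter (fun p => p.2.1 = p.2.2)).card := by
    have hsub : PNQ_Tt N ⊆ PNQ_Dst N ∪ ((PNQ_Tt N).filter (fun p => p.1 = p.2.1))
        ∪ ((PNQ_Tt N).filter (fun p => p.2.1 = p.2.2)) := by
      intro p hp
      simp only [PNQ_Dst, mem_union, mem_filter, hp, true_and, and_true]
      simp only [PNQ_Tt, PNQ_U, mem_filter, mem_product, mem_range] at hp
      omega
    calc (PNQ_Tt N).card ≤ _ := Finset.card_le_card hsub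
      _ ≤ _ := (Finset.card_union_le _ _).trans
          (Nat.add_le_add_right (Finset.card_union_le _ _) _)
  have hsq : ((range (N+1)) ×ˢ (range (N+1))).card = (N+1)^2 := by
    simp [Finset.card_product]; ring
  have h1 : ((PNQ_Tt N).filter (fun p => p.1 = p.2.1)).card ≤ (N+1)^2 := by
    rw [← hsq]
    apply Finset.card_le_card_of_injOn (fun p => (p.2.1, p.2.2))
    · rintro ⟨x, y, z⟩ hp
      simp only [PNQ_Tt, PNQ_U, mem_filter, mem_product, mem_range, mem_coe] at hp
      simp only [mem_product, mem_range, mem_coe]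
      omega
    · rintro ⟨x, y, z⟩ hp ⟨x', y', z'⟩ hp' heq
      simp only [coe_filter, Set.mem_setOf_eq, PNQ_Tt, PNQ_U, mem_filter, mem_product,
        mem_range] at hp hp'
      simp only [Prod.mk.injEq] at heq ⊢
      omega
  have h2 : ((PNQ_Tt N).filter (fun p => p.2.1 = p.2.2)).card ≤ (N+1)^2 := by
    rw [← hsq]
    apply Finset.card_le_card_of_injOn (fun p => (p.1, p.2.1))
    · rintro ⟨x, y, z⟩ hp
      simp only [PNQ_Tt, PNQ_U, mem_filter, mem_product, mem_range, mem_coe] at hp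
      simp only [mem_product, mem_range, mem_coe]
      omega
    · rintro ⟨x, y, z⟩ hp ⟨x', y', z'⟩ hp' heq
      simp only [coe_filter, Set.mem_setOf_eq, PNQ_Tt, PNQ_U, mem_filter, mem_product,
        mem_range] at hp hp'
      simp only [Prod.mk.injEq] at heq ⊢
      omega
  have h3 := PNQ_six_Dst_le N
  omega

/-! ### Identification of the set with a finset -/

lemma PNQ_ncard_eq (N : ℕ) :
    (Set.ncard {a : Fin 4 → ℕ | (∀ i, 1 ≤ a i) ∧
      (∀ i j : Fin 4, i ≤ j → a j ≤ a i) ∧ (∑ i, a i) = N ∧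
      a 1 + a 2 + a 3 ≤ a 0}) = (PNQ_Tt N).card := by
  set Ψ : ℕ × ℕ × ℕ → (Fin 4 → ℕ) :=
    fun q i => if i = 0 then N - (q.1 + q.2.1 + q.2.2)
      else if i = 1 then q.1 else if i = 2 then q.2.1 else q.2.2 with hΨ
  have hinj : Function.Injective Ψ := by
    rintro ⟨x, y, z⟩ ⟨x', y', z'⟩ h
    have h1 := congrFun h 1
    have h2 := congrFun h 2
    have h3 := congrFun h 3
    simp [hΨ] at h1 h2 h3
    simp [Prod.mk.injEq, h1, h2, h3]
  have himg : {a : Fin 4 → ℕ | (∀ i, 1 ≤ a i) ∧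
      (∀ i j : Fin 4, i ≤ j → a j ≤ a i) ∧ (∑ i, a i) = N ∧
      a 1 + a 2 + a 3 ≤ a 0} = Ψ '' ↑(PNQ_Tt N) := by
    ext a
    simp only [Set.mem_setOf_eq, Set.mem_image, mem_coe]
    constructor
    · rintro ⟨hpos, hmono, hsum, hquad⟩
      have hs : a 0 + a 1 + a 2 + a 3 = N := by
        rw [← hsum, Fin.sum_univ_four]
      have h10 : a 1 ≤ a 0 := hmono 0 1 (by decide)
      have h21 : a 2 ≤ a 1 := hmono 1 2 (by decide)
      have h32 : a 3 ≤ a 2 := hmono 2 3 (by decide)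
      refine ⟨(a 1, a 2, a 3), ?_, ?_⟩
      · simp only [PNQ_Tt, PNQ_U, mem_filter, mem_product, mem_range]
        refine ⟨⟨⟨?_, ?_, ?_⟩, hpos 1, hpos 2, hpos 3, ?_⟩, h32, h21⟩ <;> omega
      · funext i
        fin_cases i <;> simp [hΨ] <;> omega
    · rintro ⟨⟨x, y, z⟩, hq, rfl⟩
      simp only [PNQ_Tt, PNQ_U, mem_filter, mem_product, mem_range] at hq
      refine ⟨?_, ?_, ?_, ?_⟩
      · intro i; fin_cases i <;> simp [hΨ] <;> omega
      · intro i j hij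
        fin_cases i <;> fin_cases j <;> simp only [hΨ] <;>
          simp [Fin.le_def] at hij ⊢ <;> omega
      · rw [Fin.sum_univ_four]; simp [hΨ]; omega
      · simp [hΨ]; omega
  rw [himg, Set.ncard_image_of_injective _ hinj, Set.ncard_coe_finset]

end PNQCount

section PNQAnalytic
open Filter

/-! ### Analytic part -/

noncomputable def PNQ_lo (x : ℝ) : ℝ := ((x-1)*(x-3)*(x-5)/12) / ((x-1)*(x-2)*(x-3)/6)
noncomputable def PNQ_hi (x : ℝ) : ℝ :=
  (x*(x-2)*(x-4)/12 + 48*(x+1)^2) / ((x-1)*(x-2)*(x-3)/6)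

lemma PNQ_inv_lim : Tendsto (fun N : ℕ => ((N:ℝ))⁻¹) atTop (nhds 0) :=
  tendsto_inv_atTop_zero.comp tendsto_natCast_atTop_atTop

lemma PNQ_lo_lim : Tendsto (fun N : ℕ => PNQ_lo (N:ℝ)) atTop (nhds (1/2)) := by
  have hG : ContinuousAt
      (fun t : ℝ => ((1-t)*(1-3*t)*(1-5*t))/(2*((1-t)*(1-2*t)*(1-3*t)))) 0 := by
    apply ContinuousAt.div (by fun_prop) (by fun_prop)
    norm_num
  have h := hG.tendsto.comp PNQ_inv_lim
  have h2 : Tendsto (fun N : ℕ =>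
      ((1-(N:ℝ)⁻¹)*(1-3*(N:ℝ)⁻¹)*(1-5*(N:ℝ)⁻¹))
        / (2*((1-(N:ℝ)⁻¹)*(1-2*(N:ℝ)⁻¹)*(1-3*(N:ℝ)⁻¹)))) atTop (nhds (1/2)) := by
    convert h using 2 <;> norm_num
  refine h2.congr' ?_
  filter_upwards [eventually_ge_atTop 6] with N hN
  have hx : (6:ℝ) ≤ (N:ℝ) := by exact_mod_cast hN
  have h0 : (N:ℝ) ≠ 0 := by linarith
  have h1 : (N:ℝ) - 1 ≠ 0 := by intro h; nlinarith
  have hh2 : (N:ℝ) - 2 ≠ 0 := by intro h; nlinarith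
  have h3 : (N:ℝ) - 3 ≠ 0 := by intro h; nlinarith
  unfold PNQ_lo
  field_simp
  ring

lemma PNQ_hi_lim : Tendsto (fun N : ℕ => PNQ_hi (N:ℝ)) atTop (nhds (1/2)) := by
  have hG : ContinuousAt
      (fun t : ℝ => ((1-2*t)*(1-4*t)/12 + 48*t*(1+t)^2)/((1-t)*(1-2*t)*(1-3*t)/6)) 0 := by
    apply ContinuousAt.div (by fun_prop) (by fun_prop)
    norm_num
  have h := hG.tendsto.comp PNQ_inv_lim
  have h2 : Tendsto (fun N : ℕ =>
      ((1-2*(N:ℝ)⁻¹)*(1-4*(N:ℝ)⁻¹)/12 + 48*(N:ℝ)⁻¹*(1+(N:ℝ)⁻¹)^2)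
        / ((1-(N:ℝ)⁻¹)*(1-2*(N:ℝ)⁻¹)*(1-3*(N:ℝ)⁻¹)/6)) atTop (nhds (1/2)) := by
    convert h using 2 <;> norm_num
  refine h2.congr' ?_
  filter_upwards [eventually_ge_atTop 6] with N hN
  have hx : (6:ℝ) ≤ (N:ℝ) := by exact_mod_cast hN
  have h0 : (N:ℝ) ≠ 0 := by linarith
  have h1 : (N:ℝ) - 1 ≠ 0 := by intro h; nlinarith
  have hh2 : (N:ℝ) - 2 ≠ 0 := by intro h; nlinarith
  have h3 : (N:ℝ) - 3 ≠ 0 := by intro h; nlinarith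
  unfold PNQ_hi
  field_simp

lemma PNQ_cube_mono {a b : ℝ} (h2 : 2 ≤ a) (hab : a ≤ b) :
    a*(a-1)*(a-2) ≤ b*(b-1)*(b-2) := by
  nlinarith [mul_nonneg (sub_nonneg.2 hab)
      (mul_nonneg (by linarith : (0:ℝ) ≤ a - 1) (by linarith : (0:ℝ) ≤ a - 2)),
    mul_nonneg (sub_nonneg.2 hab)
      (mul_nonneg (by linarith : (0:ℝ) ≤ b - 1) (by linarith : (0:ℝ) ≤ b - 2)),
    mul_nonneg (sub_nonneg.2 hab)
      (mul_nonneg (by linarith : (0:ℝ) ≤ a) (by linarith : (0:ℝ) ≤ b)),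
    mul_nonneg (sub_nonneg.2 hab) (sub_nonneg.2 hab)]

lemma PNQ_main_bounds (N : ℕ) (hN : 12 ≤ N) :
    PNQ_lo (N:ℝ) ≤ 24 * ((PNQ_Tt N).card : ℝ) / (((N-1).choose 3 : ℕ) : ℝ) ∧
    24 * ((PNQ_Tt N).card : ℝ) / (((N-1).choose 3 : ℕ) : ℝ) ≤ PNQ_hi (N:ℝ) := by
  set m := N / 2 with hm
  set x := (N:ℝ) with hxdef
  have hx : (12:ℝ) ≤ x := by rw [hxdef]; exact_mod_cast hN
  set c := ((PNQ_Tt N).card : ℝ) with hc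
  have hUc : (PNQ_U N).card = m.choose 3 := (PNQ_U_card N).trans (PNQ_V3_card m)
  have hlowN : m.choose 3 ≤ 6 * (PNQ_Tt N).card := hUc ▸ PNQ_U_le N
  have hhighN : 6 * (PNQ_Tt N).card ≤ m.choose 3 + 12*(N+1)^2 := by
    rw [← hUc]; exact PNQ_Tt_le N
  have hclow : (m.choose 3 : ℝ) ≤ 6 * c := by rw [hc]; exact_mod_cast hlowN
  have hchigh : 6 * c ≤ (m.choose 3 : ℝ) + 12*(x+1)^2 := by
    rw [hc, hxdef]; exact_mod_cast hhighN
  have hm2 : 2 ≤ m := by omega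
  have hc3 : ((m.choose 3 : ℕ) : ℝ) = (m:ℝ)*((m:ℝ)-1)*((m:ℝ)-2)/6 :=
    PNQ_choose3_cast m hm2
  have hmlow : (x-1)/2 ≤ (m:ℝ) := by
    have : N ≤ 2*m + 1 := by omega
    have h2 : (N:ℝ) ≤ 2*(m:ℝ) + 1 := by exact_mod_cast this
    rw [hxdef]; linarith
  have hmhigh : (m:ℝ) ≤ x/2 := by
    have : 2*m ≤ N := by omega
    have h2 : 2*(m:ℝ) ≤ (N:ℝ) := by exact_mod_cast this
    rw [hxdef]; linarith
  have hm2r : (2:ℝ) ≤ (m:ℝ) := by exact_mod_cast hm2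
  have hP1 : ((x-1)/2)*((x-1)/2-1)*((x-1)/2-2) ≤ (m:ℝ)*((m:ℝ)-1)*((m:ℝ)-2) :=
    PNQ_cube_mono (by linarith) hmlow
  have hP2 : (m:ℝ)*((m:ℝ)-1)*((m:ℝ)-2) ≤ (x/2)*(x/2-1)*(x/2-2) :=
    PNQ_cube_mono hm2r hmhigh
  have hD : (((N-1).choose 3 : ℕ) : ℝ) = (x-1)*(x-2)*(x-3)/6 := by
    rw [PNQ_choose3_cast (N-1) (by omega)]
    have : ((N-1 : ℕ) : ℝ) = x - 1 := by
      rw [hxdef]; push_cast [Nat.cast_sub (by omega : 1 ≤ N)]; ring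
    rw [this]; ring
  have hDpos : (0:ℝ) < (x-1)*(x-2)*(x-3)/6 := by
    apply div_pos _ (by norm_num)
    apply mul_pos (mul_pos (by linarith) (by linarith)) (by linarith)
  rw [hD]
  constructor
  · unfold PNQ_lo
    rw [div_le_div_iff_of_pos_right hDpos]
    nlinarith [hclow, hc3, hP1]
  · unfold PNQ_hi
    rw [div_le_div_iff_of_pos_right hDpos]
    nlinarith [hchigh, hc3, hP2]

theorem prob_no_quadrilateral_four_pieces :
    Filter.Tendsto (fun N : ℕ =>
      (24 : ℝ) * (Set.ncard {a : Fin 4 → ℕ | (∀ i, 1 ≤ a i) ∧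
          (∀ i j : Fin 4, i ≤ j → a j ≤ a i) ∧ (∑ i, a i) = N ∧
          a 1 + a 2 + a 3 ≤ a 0} : ℕ) / (Nat.choose (N - 1) 3 : ℝ))
      Filter.atTop (nhds (1 / 2)) := by
  have hrw : (fun N : ℕ =>
      (24 : ℝ) * (Set.ncard {a : Fin 4 → ℕ | (∀ i, 1 ≤ a i) ∧
          (∀ i j : Fin 4, i ≤ j → a j ≤ a i) ∧ (∑ i, a i) = N ∧
          a 1 + a 2 + a 3 ≤ a 0} : ℕ) / (Nat.choose (N - 1) 3 : ℝ))
      = fun N : ℕ => 24 * ((PNQ_Tt N).card : ℝ) / (((N-1).choose 3 : ℕ) : ℝ) := by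
    funext N
    rw [PNQ_ncard_eq N]
  rw [hrw]
  apply tendsto_of_tendsto_of_tendsto_of_le_of_le' PNQ_lo_lim PNQ_hi_lim
  · filter_upwards [eventually_ge_atTop 12] with N hN
    exact (PNQ_main_bounds N hN).1
  · filter_upwards [eventually_ge_atTop 12] with N hN
    exact (PNQ_main_bounds N hN).2

end PNQAnalytic
end

section
/- The number of partitions of N into summands restricted to a finite set S of r positive integers with gcd 1 is asymptotically N^{r-1}/(P·(r-1)!) as N → ∞, where P is the product of the elements of S. Formally, if p_S(N) denotes the number of functions c : S → ℕ with ∑_{s∈S} c(s)·s = N, then p_S(N)·P·(r-1)!/N^{r-1} → 1 as N → ∞. -/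
open Finset


namespace SchurAux

noncomputable local instance : DecidableEq (ℕ → ℕ) := Classical.decEq _

variable (S : Finset ℕ)

/-- extend a function on the subtype to ℕ, by zero -/
def extS (g : ↥S → ℕ) : ℕ → ℕ := fun n => if h : n ∈ S then g ⟨n, h⟩ else 0

/-- Finset of representations of N -/
noncomputable def AA (N : ℕ) : Finset (ℕ → ℕ) :=
  ((Fintype.piFinset fun _ : ↥S => Finset.range (N+1)).image (extS S)).filter
    fun c => ∑ s ∈ S, c s * s = N

/-- cumulative: weighted sum ≤ M -/
noncomputable def CC (M : ℕ) : Finset (ℕ → ℕ) :=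
  ((Fintype.piFinset fun _ : ↥S => Finset.range (M+1)).image (extS S)).filter
    fun c => ∑ s ∈ S, c s * s ≤ M

/-- plain: sum ≤ M -/
noncomputable def BB (M : ℕ) : Finset (ℕ → ℕ) :=
  ((Fintype.piFinset fun _ : ↥S => Finset.range (M+1)).image (extS S)).filter
    fun b => ∑ s ∈ S, b s ≤ M

lemma extS_eq_self {c : ℕ → ℕ} (h0 : ∀ s ∉ S, c s = 0) :
    extS S (fun s : ↥S => c s) = c := by
  funext n
  unfold extS
  split
  · rfl
  · exact (h0 n (by assumption)).symm

lemma mem_image_pi {c : ℕ → ℕ} {M : ℕ} (h0 : ∀ s ∉ S, c s = 0) (hb : ∀ s ∈ S, c s ≤ M) :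
    c ∈ (Fintype.piFinset fun _ : ↥S => Finset.range (M+1)).image (extS S) := by
  refine Finset.mem_image.2 ⟨fun s : ↥S => c s, ?_, extS_eq_self S h0⟩
  simp only [Fintype.mem_piFinset, Finset.mem_range]
  exact fun s => Nat.lt_succ_of_le (hb s s.2)

lemma zero_off_of_mem_image {c : ℕ → ℕ} {M : ℕ}
    (h : c ∈ (Fintype.piFinset fun _ : ↥S => Finset.range (M+1)).image (extS S)) :
    ∀ s ∉ S, c s = 0 := by
  obtain ⟨g, -, rfl⟩ := Finset.mem_image.1 h
  intro s hs
  unfold extS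
  simp [hs]

lemma mem_BB {b : ℕ → ℕ} {M : ℕ} :
    b ∈ BB S M ↔ (∀ s ∉ S, b s = 0) ∧ ∑ s ∈ S, b s ≤ M := by
  constructor
  · intro h
    obtain ⟨h1, h2⟩ := Finset.mem_filter.1 h
    exact ⟨zero_off_of_mem_image S h1, h2⟩
  · rintro ⟨h0, hs⟩
    refine Finset.mem_filter.2 ⟨mem_image_pi S h0 (fun s hsS => ?_), hs⟩
    exact le_trans (Finset.single_le_sum (fun i _ => Nat.zero_le _) hsS) hs

lemma mem_CC (hpos : ∀ s ∈ S, 0 < s) {c : ℕ → ℕ} {M : ℕ} :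
    c ∈ CC S M ↔ (∀ s ∉ S, c s = 0) ∧ ∑ s ∈ S, c s * s ≤ M := by
  constructor
  · intro h
    obtain ⟨h1, h2⟩ := Finset.mem_filter.1 h
    exact ⟨zero_off_of_mem_image S h1, h2⟩
  · rintro ⟨h0, hs⟩
    refine Finset.mem_filter.2 ⟨mem_image_pi S h0 (fun s hsS => ?_), hs⟩
    calc c s ≤ c s * s := Nat.le_mul_of_pos_right _ (hpos s hsS)
    _ ≤ ∑ t ∈ S, c t * t := Finset.single_le_sum (f := fun t => c t * t) (fun i _ => Nat.zero_le _) hsS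
    _ ≤ M := hs

lemma mem_AA (hpos : ∀ s ∈ S, 0 < s) {c : ℕ → ℕ} {N : ℕ} :
    c ∈ AA S N ↔ (∀ s ∉ S, c s = 0) ∧ ∑ s ∈ S, c s * s = N := by
  constructor
  · intro h
    obtain ⟨h1, h2⟩ := Finset.mem_filter.1 h
    exact ⟨zero_off_of_mem_image S h1, h2⟩
  · rintro ⟨h0, hs⟩
    refine Finset.mem_filter.2 ⟨mem_image_pi S h0 (fun s hsS => ?_), hs⟩
    calc c s ≤ c s * s := Nat.le_mul_of_pos_right _ (hpos s hsS)
    _ ≤ ∑ t ∈ S, c t * t := Finset.single_le_sum (f := fun t => c t * t) (fun i _ => Nat.zero_le _) hsS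
    _ = N := hs

end SchurAux

lemma hockey (r : ℕ) : ∀ M : ℕ, ∑ j ∈ Finset.range (M+1), (j + r).choose r = (M + r + 1).choose (r + 1) := by
  intro M
  induction M with
  | zero => simp
  | succ M ih =>
    rw [Finset.sum_range_succ, ih]
    have h := Nat.choose_succ_succ (M + r + 1) r
    simp only [Nat.succ_eq_add_one] at h
    have e : M + 1 + r = M + r + 1 := by ring
    rw [e, h]
    ring

namespace SchurAux

lemma card_BB : ∀ (S : Finset ℕ) (M : ℕ), (BB S M).card = (M + S.card).choose S.card := by
  intro S
  induction S using Finset.induction_on with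
  | empty =>
    intro M
    have : BB ∅ M = {fun _ => 0} := by
      ext b
      rw [mem_BB]
      simp [funext_iff]
    simp [this]
  | @insert a S ha ih =>
    intro M
    have hmap : ∀ b ∈ BB (insert a S) M, b a ∈ Finset.range (M+1) := by
      intro b hb
      rw [mem_BB] at hb
      have := Finset.single_le_sum (f := b) (fun i _ => Nat.zero_le _)
        (Finset.mem_insert_self a S)
      simp only [Finset.mem_range]
      omega
    rw [Finset.card_eq_sum_card_fiberwise hmap]
    have hfib : ∀ t ∈ Finset.range (M+1),
        ((BB (insert a S) M).filter (fun b => b a = t)).card = (BB S (M - t)).card := by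
      intro t ht
      have htM : t ≤ M := by simpa [Nat.lt_succ_iff] using ht
      refine Finset.card_bij' (fun b _ => Function.update b a 0)
        (fun c _ => Function.update c a t) ?_ ?_ ?_ ?_
      · intro b hb
        obtain ⟨hb1, hbt⟩ := Finset.mem_filter.1 hb
        rw [mem_BB] at hb1
        obtain ⟨h0, hsum⟩ := hb1
        have hsum' : ∑ s ∈ insert a S, b s = b a + ∑ s ∈ S, b s := Finset.sum_insert ha
        rw [mem_BB]
        constructor
        · intro s hs
          rcases eq_or_ne s a with rfl | hne
          · simp [Function.update_self]
          · rw [Function.update_of_ne hne]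
            exact h0 s (by simp [hs, hne])
        · have : ∑ s ∈ S, Function.update b a 0 s = ∑ s ∈ S, b s := by
            refine Finset.sum_congr rfl fun s hs => ?_
            exact Function.update_of_ne (by rintro rfl; exact ha hs) _ _
          omega
      · intro c hc
        rw [mem_BB] at hc
        obtain ⟨h0, hsum⟩ := hc
        refine Finset.mem_filter.2 ⟨?_, Function.update_self a t c⟩
        rw [mem_BB]
        constructor
        · intro s hs
          simp only [Finset.mem_insert, not_or] at hs
          rw [Function.update_of_ne hs.1]
          exact h0 s hs.2
        · rw [Finset.sum_insert ha, Function.update_self]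
          have : ∑ s ∈ S, Function.update c a t s = ∑ s ∈ S, c s := by
            refine Finset.sum_congr rfl fun s hs => ?_
            exact Function.update_of_ne (by rintro rfl; exact ha hs) _ _
          omega
      · intro b hb
        obtain ⟨-, hbt⟩ := Finset.mem_filter.1 hb
        rw [Function.update_idem, ← hbt, Function.update_eq_self]
      · intro c hc
        rw [mem_BB] at hc
        have hca : c a = 0 := hc.1 a ha
        rw [Function.update_idem, ← hca, Function.update_eq_self]
    rw [Finset.sum_congr rfl hfib]
    simp only [ih]
    have hre := Finset.sum_range_reflect (fun j => (j + S.card).choose S.card) (M+1)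
    simp only [Nat.add_sub_cancel] at hre
    calc ∑ t ∈ Finset.range (M+1), (M - t + S.card).choose S.card
        = ∑ j ∈ Finset.range (M+1), (j + S.card).choose S.card := hre
      _ = (M + S.card + 1).choose (S.card + 1) := hockey _ _
      _ = (M + (insert a S).card).choose (insert a S).card := by
          rw [Finset.card_insert_of_notMem ha, Nat.add_assoc]


lemma BB_le_CC (S : Finset ℕ) (hpos : ∀ s ∈ S, 0 < s) (N : ℕ) :
    (BB S N).card ≤ (∏ s ∈ S, s) * (CC S N).card := by
  classical
  set Φ : (ℕ → ℕ) → (ℕ → ℕ) := fun b s => b s / s with hΦ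
  have himg : ∀ b ∈ BB S N, Φ b ∈ CC S N := by
    intro b hb
    rw [mem_BB] at hb
    rw [mem_CC S hpos]
    refine ⟨fun s hs => by simp [hΦ, hb.1 s hs], ?_⟩
    calc ∑ s ∈ S, b s / s * s ≤ ∑ s ∈ S, b s :=
          Finset.sum_le_sum fun s _ => Nat.div_mul_le_self _ _
      _ ≤ N := hb.2
  have hfib : ∀ c ∈ (BB S N).image Φ,
      ((BB S N).filter (fun b => Φ b = c)).card ≤ ∏ s ∈ S, s := by
    intro c _
    have hle : ((BB S N).filter (fun b => Φ b = c)).card ≤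
        (Fintype.piFinset fun s : ↥S => Finset.range (s : ℕ)).card := by
      refine Finset.card_le_card_of_injOn (fun b => fun s : ↥S => b s % s) ?_ ?_
      · intro b hb
        simp only [Finset.mem_coe, Fintype.mem_piFinset, Finset.mem_range, Subtype.forall]
        exact fun s hs => Nat.mod_lt _ (hpos s hs)
      · intro b₁ h₁ b₂ h₂ heq
        obtain ⟨hb₁, hc₁⟩ := Finset.mem_filter.1 h₁
        obtain ⟨hb₂, hc₂⟩ := Finset.mem_filter.1 h₂
        rw [mem_BB] at hb₁ hb₂
        funext s
        by_cases hs : s ∈ S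
        · have e1 : b₁ s % s = b₂ s % s := congrFun heq ⟨s, hs⟩
          have e2 : b₁ s / s = b₂ s / s := by
            have := congrFun (hc₁.trans hc₂.symm) s
            simpa [hΦ] using this
          calc b₁ s = s * (b₁ s / s) + b₁ s % s := (Nat.div_add_mod _ _).symm
            _ = s * (b₂ s / s) + b₂ s % s := by rw [e1, e2]
            _ = b₂ s := Nat.div_add_mod _ _
        · rw [hb₁.1 s hs, hb₂.1 s hs]
    calc ((BB S N).filter (fun b => Φ b = c)).card
        ≤ (Fintype.piFinset fun s : ↥S => Finset.range (s : ℕ)).card := hle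
      _ = ∏ s ∈ S, s := by
          rw [Fintype.card_piFinset]
          simp only [Finset.card_range]
          exact Finset.prod_coe_sort S (fun s => s)
  calc (BB S N).card ≤ (∏ s ∈ S, s) * ((BB S N).image Φ).card :=
        Finset.card_le_mul_card_image _ _ hfib
    _ ≤ (∏ s ∈ S, s) * (CC S N).card := by
        refine Nat.mul_le_mul_left _ (Finset.card_le_card ?_)
        intro c hc
        obtain ⟨b, hb, rfl⟩ := Finset.mem_image.1 hc
        exact himg b hb

lemma CC_le_BB (S : Finset ℕ) (hpos : ∀ s ∈ S, 0 < s) (N : ℕ) :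
    (∏ s ∈ S, s) * (CC S N).card ≤ (BB S (N + ∑ s ∈ S, s)).card := by
  classical
  set Ψ : (ℕ → ℕ) × (↥S → ℕ) → (ℕ → ℕ) :=
    fun p n => if h : n ∈ S then p.1 n * n + p.2 ⟨n, h⟩ else 0 with hΨ
  have key : ((CC S N) ×ˢ (Fintype.piFinset fun s : ↥S => Finset.range (s : ℕ))).card ≤
      (BB S (N + ∑ s ∈ S, s)).card := by
    refine Finset.card_le_card_of_injOn Ψ ?_ ?_
    · rintro ⟨c, g⟩ hp
      obtain ⟨hc, hg⟩ := Finset.mem_product.1 hp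
      dsimp only at hc hg
      rw [mem_CC S hpos] at hc
      simp only [Fintype.mem_piFinset, Finset.mem_range] at hg
      rw [Finset.mem_coe, mem_BB]
      constructor
      · intro s hs
        simp [hΨ, hs]
      · have e : ∑ s ∈ S, Ψ (c, g) s = ∑ x ∈ S.attach, (c x * x + g x) := by
          rw [← Finset.sum_attach S (fun s => Ψ (c, g) s)]
          exact Finset.sum_congr rfl fun x _ => by simp [hΨ, x.2]
        have h1 : ∑ x ∈ S.attach, ((c x * x : ℕ) + g x)
            = ∑ x ∈ S.attach, (c x * x : ℕ) + ∑ x ∈ S.attach, g x :=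
          Finset.sum_add_distrib
        have h2 : ∑ x ∈ S.attach, (c x * x : ℕ) = ∑ s ∈ S, c s * s :=
          Finset.sum_attach S (fun s => c s * s)
        have h3 : ∑ x ∈ S.attach, (g x : ℕ) ≤ ∑ x ∈ S.attach, (x : ℕ) :=
          Finset.sum_le_sum fun x _ => le_of_lt (hg x)
        have h4 : ∑ x ∈ S.attach, (x : ℕ) = ∑ s ∈ S, s := Finset.sum_attach S (fun s => s)
        have h5 := hc.2
        omega
    · rintro ⟨c₁, g₁⟩ h₁ ⟨c₂, g₂⟩ h₂ heq
      simp only [Finset.coe_product, Set.mem_prod, Finset.mem_coe] at h₁ h₂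
      obtain ⟨hc₁, hg₁⟩ := h₁
      obtain ⟨hc₂, hg₂⟩ := h₂
      rw [mem_CC S hpos] at hc₁ hc₂
      simp only [Fintype.mem_piFinset, Finset.mem_range] at hg₁ hg₂
      have hkey : ∀ (s : ℕ) (hs : s ∈ S), c₁ s = c₂ s ∧ g₁ ⟨s, hs⟩ = g₂ ⟨s, hs⟩ := by
        intro s hs
        have he : c₁ s * s + g₁ ⟨s, hs⟩ = c₂ s * s + g₂ ⟨s, hs⟩ := by
          have := congrFun heq s
          simpa [hΨ, hs] using this
        have hs0 := hpos s hs
        have hq1 : (c₁ s * s + g₁ ⟨s, hs⟩) / s = c₁ s := by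
          rw [mul_comm, Nat.mul_add_div hs0, Nat.div_eq_of_lt (hg₁ ⟨s, hs⟩)]
          omega
        have hq2 : (c₂ s * s + g₂ ⟨s, hs⟩) / s = c₂ s := by
          rw [mul_comm, Nat.mul_add_div hs0, Nat.div_eq_of_lt (hg₂ ⟨s, hs⟩)]
          omega
        have hcc : c₁ s = c₂ s := by rw [← hq1, ← hq2, he]
        refine ⟨hcc, ?_⟩
        have : c₁ s * s = c₂ s * s := by rw [hcc]
        omega
      have hc : c₁ = c₂ := by
        funext s
        by_cases hs : s ∈ S
        · exact (hkey s hs).1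
        · rw [hc₁.1 s hs, hc₂.1 s hs]
      have hg : g₁ = g₂ := by
        funext x
        have := (hkey x x.2).2
        simpa using this
      rw [hc, hg]
  calc (∏ s ∈ S, s) * (CC S N).card
      = ((CC S N) ×ˢ (Fintype.piFinset fun s : ↥S => Finset.range (s : ℕ))).card := by
        rw [Finset.card_product, Fintype.card_piFinset]
        simp only [Finset.card_range]
        rw [Finset.prod_coe_sort S (fun s => s), mul_comm]
    _ ≤ (BB S (N + ∑ s ∈ S, s)).card := key


lemma fact_choose_bounds (r : ℕ) : ∀ N : ℕ,
    N ^ r ≤ r.factorial * (N + r).choose r ∧ r.factorial * (N + r).choose r ≤ (N + r) ^ r := by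
  induction r with
  | zero => intro N; simp
  | succ r ih =>
    intro N
    obtain ⟨h1, h2⟩ := ih N
    have key : (r+1).factorial * (N + (r+1)).choose (r+1)
        = (N + r + 1) * (r.factorial * (N + r).choose r) := by
      have h := Nat.add_one_mul_choose_eq (N + r) r
      rw [Nat.factorial_succ]
      have e : N + (r + 1) = (N + r) + 1 := by ring
      rw [e]
      calc (r+1) * r.factorial * ((N + r + 1).choose (r+1))
          = r.factorial * ((N + r + 1).choose (r+1) * (r+1)) := by ring
        _ = r.factorial * ((N + r + 1) * (N + r).choose r) := by rw [← h]
        _ = (N + r + 1) * (r.factorial * (N + r).choose r) := by ring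
    constructor
    · calc N ^ (r+1) = N * N ^ r := by ring
        _ ≤ (N + r + 1) * (r.factorial * (N + r).choose r) :=
            Nat.mul_le_mul (by omega) h1
        _ = _ := key.symm
    · calc (r+1).factorial * (N + (r+1)).choose (r+1)
          = (N + r + 1) * (r.factorial * (N + r).choose r) := key
        _ ≤ (N + r + 1) * (N + r) ^ r := Nat.mul_le_mul_left _ h2
        _ ≤ (N + r + 1) * (N + r + 1) ^ r :=
            Nat.mul_le_mul_left _ (Nat.pow_le_pow_left (by omega) r)
        _ = (N + (r + 1)) ^ (r+1) := by ring

lemma pow_add_upper (b d : ℕ) : ∀ r : ℕ, (b + d) ^ (r+1) ≤ b ^ (r+1) + (r+1) * d * (b + d) ^ r := by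
  intro r
  induction r with
  | zero => simp
  | succ r ih =>
    calc (b + d) ^ (r+2) = (b + d) * (b + d) ^ (r+1) := by ring
      _ ≤ (b + d) * (b ^ (r+1) + (r+1) * d * (b + d) ^ r) := Nat.mul_le_mul_left _ ih
      _ = b ^ (r+2) + d * b ^ (r+1) + (r+1) * d * (b + d) ^ (r+1) := by ring
      _ ≤ b ^ (r+2) + d * (b + d) ^ (r+1) + (r+1) * d * (b + d) ^ (r+1) := by
          have h := Nat.mul_le_mul_left d (Nat.pow_le_pow_left (Nat.le_add_right b d) (r+1))
          omega
      _ = b ^ (r+2) + (r+2) * d * (b + d) ^ (r+1) := by ring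

lemma pow_add_lower (b d : ℕ) : ∀ r : ℕ, b ^ (r+1) + (r+1) * d * b ^ r ≤ (b + d) ^ (r+1) := by
  intro r
  induction r with
  | zero => simp
  | succ r ih =>
    have expand : (b + d) * (b ^ (r+1) + (r+1) * d * b ^ r)
        = b ^ (r+2) + (r+2) * d * b ^ (r+1) + (r+1) * (d * d) * b ^ r := by ring
    calc b ^ (r+2) + (r+2) * d * b ^ (r+1)
        ≤ b ^ (r+2) + (r+2) * d * b ^ (r+1) + (r+1) * (d * d) * b ^ r := Nat.le_add_right _ _
      _ = (b + d) * (b ^ (r+1) + (r+1) * d * b ^ r) := expand.symm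
      _ ≤ (b + d) * (b + d) ^ (r+1) := Nat.mul_le_mul_left _ ih
      _ = (b + d) ^ (r+2) := by ring

lemma pow_add_upper' (b d r : ℕ) (hr : 1 ≤ r) :
    (b + d) ^ r ≤ b ^ r + r * d * (b + d) ^ (r - 1) := by
  obtain ⟨q, rfl⟩ : ∃ q, r = q + 1 := ⟨r - 1, by omega⟩
  simpa using pow_add_upper b d q

lemma pow_add_lower' (b d r : ℕ) (hr : 1 ≤ r) :
    b ^ r + r * d * b ^ (r - 1) ≤ (b + d) ^ r := by
  obtain ⟨q, rfl⟩ : ∃ q, r = q + 1 := ⟨r - 1, by omega⟩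
  simpa using pow_add_lower b d q

lemma bezout : ∀ S : Finset ℕ, ∃ z : ℕ → ℤ, ∑ s ∈ S, z s * s = ((S.gcd id : ℕ) : ℤ) := by
  intro S
  induction S using Finset.induction_on with
  | empty => exact ⟨fun _ => 0, by simp⟩
  | @insert a S ha ih =>
    obtain ⟨z, hz⟩ := ih
    set g := S.gcd id with hg
    refine ⟨fun s => if s = a then Nat.gcdA a g else z s * Nat.gcdB a g, ?_⟩
    rw [Finset.sum_insert ha]
    have hrest : ∑ s ∈ S, (if s = a then Nat.gcdA a g else z s * Nat.gcdB a g) * (s : ℤ)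
        = Nat.gcdB a g * ∑ s ∈ S, z s * s := by
      rw [Finset.mul_sum]
      refine Finset.sum_congr rfl fun s hs => ?_
      rw [if_neg (by rintro rfl; exact ha hs)]
      ring
    rw [hrest, hz]
    simp only [if_pos rfl]
    have hb := Nat.gcd_eq_gcd_ab a g
    have hgi : (insert a S).gcd id = Nat.gcd a g := by
      rw [Finset.gcd_insert]
      rfl
    rw [hgi]
    push_cast
    rw [hb]
    ring


def Rep (S : Finset ℕ) (n : ℕ) : Prop :=
  ∃ c : ℕ → ℕ, (∀ s ∉ S, c s = 0) ∧ ∑ s ∈ S, c s * s = n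

lemma rep_sum (S : Finset ℕ) (t : ℕ → ℕ) : Rep S (∑ s ∈ S, t s * s) := by
  refine ⟨fun s => if s ∈ S then t s else 0, fun s hs => if_neg hs, ?_⟩
  exact Finset.sum_congr rfl fun s hs => by simp [hs]

lemma rep_add {S : Finset ℕ} {m n : ℕ} (hm : Rep S m) (hn : Rep S n) : Rep S (m + n) := by
  obtain ⟨c, hc0, hcs⟩ := hm
  obtain ⟨d, hd0, hds⟩ := hn
  refine ⟨fun s => c s + d s, fun s hs => by simp [hc0 s hs, hd0 s hs], ?_⟩
  simp only [add_mul]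
  rw [Finset.sum_add_distrib, hcs, hds]

lemma rep_mul {S : Finset ℕ} (k : ℕ) {n : ℕ} (hn : Rep S n) : Rep S (k * n) := by
  obtain ⟨c, hc0, hcs⟩ := hn
  refine ⟨fun s => k * c s, fun s hs => by simp [hc0 s hs], ?_⟩
  rw [← hcs, Finset.mul_sum]
  exact Finset.sum_congr rfl fun s _ => by ring

lemma exists_K (S : Finset ℕ) (hgcd : S.gcd id = 1) :
    ∃ K : ℕ, 1 ≤ K ∧ ∀ n, K ≤ n → Rep S n := by
  obtain ⟨z, hz⟩ := bezout S
  rw [hgcd] at hz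
  push_cast at hz
  set b := ∑ s ∈ S, (-z s).toNat * s with hbdef
  set a := ∑ s ∈ S, (z s).toNat * s with hadef
  have hab : a = b + 1 := by
    have h1 : (a : ℤ) - b = 1 := by
      rw [hadef, hbdef]
      push_cast
      rw [← Finset.sum_sub_distrib]
      rw [← hz]
      refine Finset.sum_congr rfl fun s _ => ?_
      have : ((z s).toNat : ℤ) - ((-z s).toNat : ℤ) = z s := by
        omega
      rw [← sub_mul, this]
    omega
  have hRb : Rep S b := rep_sum S _
  have hRa : Rep S (b + 1) := by rw [← hab]; exact rep_sum S _
  refine ⟨b * b + 1, by omega, fun n hn => ?_⟩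
  rcases Nat.eq_zero_or_pos b with hb0 | hbpos
  · have h1 : Rep S 1 := by rw [hb0] at hRa; exact hRa
    have := rep_mul n h1
    simpa using this
  · set q := n / b with hq
    set r' := n % b with hr
    have hdm : b * q + r' = n := Nat.div_add_mod n b
    have hrb : r' < b := Nat.mod_lt _ hbpos
    have hqb : b ≤ q := by
      rw [hq, Nat.le_div_iff_mul_le hbpos]
      omega
    obtain ⟨d, hd⟩ : ∃ d, q = d + r' := ⟨q - r', by omega⟩
    have hn' : n = d * b + r' * (b + 1) := by
      have : d * b + r' * (b + 1) = b * (d + r') + r' := by ring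
      rw [this, ← hd, hdm]
    rw [hn']
    exact rep_add (rep_mul d hRb) (rep_mul r' hRa)

lemma card_AA_mono (S : Finset ℕ) (hpos : ∀ s ∈ S, 0 < s) {k N : ℕ} (h : Rep S k) :
    (AA S N).card ≤ (AA S (N + k)).card := by
  classical
  obtain ⟨d, hd0, hds⟩ := h
  refine Finset.card_le_card_of_injOn (fun c n => c n + d n) ?_ ?_
  · intro c hc
    rw [Finset.mem_coe, mem_AA S hpos] at hc ⊢
    dsimp only
    constructor
    · intro s hs
      rw [hc.1 s hs, hd0 s hs]
    · simp only [add_mul]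
      rw [Finset.sum_add_distrib, hc.2, hds]
  · intro c₁ _ c₂ _ heq
    funext n
    have := congrFun heq n
    simp only at this
    omega

lemma card_CC_eq_sum (S : Finset ℕ) (hpos : ∀ s ∈ S, 0 < s) (M : ℕ) :
    (CC S M).card = ∑ n ∈ Finset.range (M + 1), (AA S n).card := by
  classical
  have hmap : ∀ c ∈ CC S M, (∑ s ∈ S, c s * s) ∈ Finset.range (M + 1) := by
    intro c hc
    rw [mem_CC S hpos] at hc
    simp only [Finset.mem_range]
    omega
  rw [Finset.card_eq_sum_card_fiberwise hmap]
  refine Finset.sum_congr rfl fun n hn => ?_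
  congr 1
  ext c
  rw [Finset.mem_filter, mem_CC S hpos, mem_AA S hpos]
  simp only [Finset.mem_range] at hn
  constructor
  · rintro ⟨⟨h0, -⟩, h2⟩
    exact ⟨h0, h2⟩
  · rintro ⟨h0, h2⟩
    exact ⟨⟨h0, by omega⟩, h2⟩


lemma CC_pow_bounds (S : Finset ℕ) (hpos : ∀ s ∈ S, 0 < s) (m : ℕ) :
    m ^ S.card ≤ S.card.factorial * ((∏ s ∈ S, s) * (CC S m).card) ∧
    S.card.factorial * ((∏ s ∈ S, s) * (CC S m).card)
      ≤ (m + (∑ s ∈ S, s) + S.card) ^ S.card := by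
  have hlow : (m + S.card).choose S.card ≤ (∏ s ∈ S, s) * (CC S m).card :=
    le_trans (le_of_eq (card_BB S m).symm) (BB_le_CC S hpos m)
  have hhigh : (∏ s ∈ S, s) * (CC S m).card ≤ (m + (∑ s ∈ S, s) + S.card).choose S.card := by
    refine le_trans (CC_le_BB S hpos m) ?_
    rw [card_BB]
  constructor
  · exact le_trans (fact_choose_bounds S.card m).1 (Nat.mul_le_mul_left _ hlow)
  · exact le_trans (Nat.mul_le_mul_left _ hhigh)
      (fact_choose_bounds S.card (m + (∑ s ∈ S, s))).2

lemma upper_nat (S : Finset ℕ) (hpos : ∀ s ∈ S, 0 < s) (hne : S.Nonempty)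
    {K : ℕ} (hK : 1 ≤ K) (hrep : ∀ n, K ≤ n → Rep S n) (N M : ℕ) (hM : 1 ≤ M) :
    (∏ s ∈ S, s) * S.card.factorial * (M * (AA S N).card) ≤
      S.card * ((M + (∑ s ∈ S, s) + S.card) *
        ((N + K - 1) + (M + (∑ s ∈ S, s) + S.card)) ^ (S.card - 1)) := by
  classical
  set P := ∏ s ∈ S, s
  set σ := ∑ s ∈ S, s
  set r := S.card with hrdef
  have hr1 : 1 ≤ r := Finset.card_pos.2 hne
  set b := N + K - 1 with hbdef
  set d := M + σ + r with hddef
  -- step 1: monotonicity on the interval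
  have h1 : ∀ n ∈ Finset.Ico (N + K) (N + K + M), (AA S N).card ≤ (AA S n).card := by
    intro n hn
    rw [Finset.mem_Ico] at hn
    have hrepn : Rep S (n - N) := hrep _ (by omega)
    have := card_AA_mono S hpos (N := N) hrepn
    rwa [show N + (n - N) = n by omega] at this
  have hsum : M * (AA S N).card ≤ ∑ n ∈ Finset.Ico (N + K) (N + K + M), (AA S n).card := by
    calc M * (AA S N).card = ∑ _n ∈ Finset.Ico (N + K) (N + K + M), (AA S N).card := by
          rw [Finset.sum_const, Nat.card_Ico, smul_eq_mul]
          congr 1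
          omega
      _ ≤ _ := Finset.sum_le_sum h1
  have hsplit : (CC S (N + K - 1)).card +
      ∑ n ∈ Finset.Ico (N + K) (N + K + M), (AA S n).card = (CC S (N + K + M - 1)).card := by
    rw [card_CC_eq_sum S hpos, card_CC_eq_sum S hpos,
      show N + K - 1 + 1 = N + K by omega, show N + K + M - 1 + 1 = N + K + M by omega]
    exact Finset.sum_range_add_sum_Ico _ (by omega)
  -- main chain
  have hchain : r.factorial * (P * (CC S (N + K - 1)).card) + P * r.factorial * (M * (AA S N).card)
      ≤ b ^ r + r * d * (b + d) ^ (r - 1) := by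
    calc r.factorial * (P * (CC S (N + K - 1)).card) + P * r.factorial * (M * (AA S N).card)
        ≤ r.factorial * (P * (CC S (N + K - 1)).card) +
            P * r.factorial * ∑ n ∈ Finset.Ico (N + K) (N + K + M), (AA S n).card := by
          exact Nat.add_le_add_left (Nat.mul_le_mul_left _ hsum) _
      _ = r.factorial * (P * (CC S (N + K + M - 1)).card) := by
          rw [← hsplit]; ring
      _ ≤ (N + K + M - 1 + σ + r) ^ r := (CC_pow_bounds S hpos _).2
      _ = (b + d) ^ r := by congr 1; omega
      _ ≤ b ^ r + r * d * (b + d) ^ (r - 1) := pow_add_upper' b d r hr1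
  have hlow : b ^ r ≤ r.factorial * (P * (CC S (N + K - 1)).card) := (CC_pow_bounds S hpos b).1
  have hfinal : P * r.factorial * (M * (AA S N).card) ≤ r * d * (b + d) ^ (r - 1) :=
    Nat.le_of_add_le_add_left (le_trans hchain (Nat.add_le_add_right hlow _))
  calc P * r.factorial * (M * (AA S N).card) ≤ r * d * (b + d) ^ (r - 1) := hfinal
    _ = r * (d * (b + d) ^ (r - 1)) := mul_assoc _ _ _

lemma lower_nat (S : Finset ℕ) (hpos : ∀ s ∈ S, 0 < s) (hne : S.Nonempty)
    {K : ℕ} (hK : 1 ≤ K) (hrep : ∀ n, K ≤ n → Rep S n) (N M : ℕ)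
    (hM : (∑ s ∈ S, s) + S.card + 1 ≤ M) (hN : K + M ≤ N) :
    S.card * ((M - ((∑ s ∈ S, s) + S.card)) *
        ((N - K - M) + (∑ s ∈ S, s) + S.card) ^ (S.card - 1)) ≤
      (∏ s ∈ S, s) * S.card.factorial * (M * (AA S N).card) := by
  classical
  set P := ∏ s ∈ S, s
  set σ := ∑ s ∈ S, s
  set r := S.card with hrdef
  have hr1 : 1 ≤ r := Finset.card_pos.2 hne
  set b := (N - K - M) + σ + r with hbdef
  set d := M - (σ + r) with hddef
  have hbd : b + d = N - K := by omega
  have h1 : ∀ n ∈ Finset.Ico (N - K - M + 1) (N - K + 1), (AA S n).card ≤ (AA S N).card := by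
    intro n hn
    rw [Finset.mem_Ico] at hn
    have hrepn : Rep S (N - n) := hrep _ (by omega)
    have := card_AA_mono S hpos (N := n) hrepn
    rwa [show n + (N - n) = N by omega] at this
  have hsum : ∑ n ∈ Finset.Ico (N - K - M + 1) (N - K + 1), (AA S n).card
      ≤ M * (AA S N).card := by
    calc ∑ n ∈ Finset.Ico (N - K - M + 1) (N - K + 1), (AA S n).card
        ≤ ∑ _n ∈ Finset.Ico (N - K - M + 1) (N - K + 1), (AA S N).card :=
          Finset.sum_le_sum h1
      _ = M * (AA S N).card := by
          rw [Finset.sum_const, Nat.card_Ico, smul_eq_mul]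
          congr 1
          omega
  have hsplit : (CC S (N - K - M)).card +
      ∑ n ∈ Finset.Ico (N - K - M + 1) (N - K + 1), (AA S n).card = (CC S (N - K)).card := by
    rw [card_CC_eq_sum S hpos, card_CC_eq_sum S hpos]
    exact Finset.sum_range_add_sum_Ico _ (by omega)
  have hchain : b ^ r + r * d * b ^ (r - 1)
      ≤ b ^ r + P * r.factorial * (M * (AA S N).card) := by
    calc b ^ r + r * d * b ^ (r - 1) ≤ (b + d) ^ r := pow_add_lower' b d r hr1
      _ = (N - K) ^ r := by rw [hbd]
      _ ≤ r.factorial * (P * (CC S (N - K)).card) := (CC_pow_bounds S hpos _).1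
      _ = r.factorial * (P * (CC S (N - K - M)).card) +
          P * r.factorial * ∑ n ∈ Finset.Ico (N - K - M + 1) (N - K + 1), (AA S n).card := by
          rw [← hsplit]; ring
      _ ≤ (N - K - M + σ + r) ^ r + P * r.factorial * (M * (AA S N).card) := by
          have h2 := Nat.mul_le_mul_left (P * r.factorial) hsum
          exact Nat.add_le_add (CC_pow_bounds S hpos (N - K - M)).2 h2
      _ = b ^ r + P * r.factorial * (M * (AA S N).card) := rfl
  have hfinal : r * d * b ^ (r - 1) ≤ P * r.factorial * (M * (AA S N).card) :=
    Nat.le_of_add_le_add_left hchain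
  calc r * ((M - (σ + r)) * ((N - K - M) + σ + r) ^ (r - 1))
      = r * d * b ^ (r - 1) := (mul_assoc _ _ _).symm
    _ ≤ _ := hfinal


lemma cast_nat_sub_ge (a b : ℕ) : (a:ℝ) - b ≤ ((a - b : ℕ) : ℝ) := by
  rcases le_total b a with h | h
  · rw [Nat.cast_sub h]
  · have h0 : a - b = 0 := by omega
    rw [h0]
    have : (a:ℝ) ≤ b := Nat.cast_le.2 h
    simp
    linarith

end SchurAux

open Filter SchurAux in
theorem schur_denumerant_asymptotic (S : Finset ℕ) (hpos : ∀ s ∈ S, 0 < s)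
    (hgcd : S.gcd id = 1) :
    Filter.Tendsto (fun N : ℕ =>
      (Set.ncard {c : ℕ → ℕ | (∀ s ∉ S, c s = 0) ∧ ∑ s ∈ S, c s * s = N} : ℝ) *
          (∏ s ∈ S, (s : ℝ)) * (Nat.factorial (S.card - 1)) / (N : ℝ) ^ (S.card - 1))
      Filter.atTop (nhds 1) := by
  classical
  have hne : S.Nonempty := by
    rcases Finset.eq_empty_or_nonempty S with rfl | h
    · simp at hgcd
    · exact h
  obtain ⟨K, hK1, hKrep⟩ := SchurAux.exists_K S hgcd
  set r := S.card with hr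
  have hr1 : 1 ≤ r := Finset.card_pos.2 hne
  set q := r - 1 with hqd
  have hrq : r = q + 1 := by omega
  set σ := ∑ s ∈ S, s with hσ
  set Pn := ∏ s ∈ S, s with hPd
  have hPpos : 0 < Pn := Finset.prod_pos hpos
  set A1 := K + σ + r with hA1
  set A2 := σ + r with hA2
  have hA1R : (A1:ℝ) = (K:ℝ) + σ + r := by rw [hA1]; push_cast; ring
  have hA2R : (A2:ℝ) = (σ:ℝ) + r := by rw [hA2]; push_cast; ring
  -- replace statement function
  have hfun : ∀ N : ℕ,
      ((SchurAux.AA S N).card : ℝ) * (Pn : ℝ) * (q.factorial : ℝ) / (N:ℝ)^q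
      = (Set.ncard {c : ℕ → ℕ | (∀ s ∉ S, c s = 0) ∧ ∑ s ∈ S, c s * s = N} : ℝ) *
          (∏ s ∈ S, (s : ℝ)) * (Nat.factorial (S.card - 1)) / (N : ℝ) ^ (S.card - 1) := by
    intro N
    have h1 : {c : ℕ → ℕ | (∀ s ∉ S, c s = 0) ∧ ∑ s ∈ S, c s * s = N} = ↑(SchurAux.AA S N) := by
      ext c
      rw [Finset.mem_coe, SchurAux.mem_AA S hpos]
      rfl
    rw [h1, Set.ncard_coe_finset, ← hr, ← hqd]
    have h2 : ((Pn:ℕ):ℝ) = ∏ s ∈ S, (s : ℝ) := by rw [hPd]; push_cast; rfl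
    rw [h2]
  -- abbreviations
  set g : ℕ → ℝ := fun N => ((SchurAux.AA S N).card : ℝ) * (Pn : ℝ) * (q.factorial : ℝ) / (N:ℝ)^q
    with hg
  set U : ℕ → ℝ := fun N =>
    (1 + (A2:ℝ)/(Nat.sqrt N : ℝ)) * (1 + (A1:ℝ)/(N:ℝ) + (Nat.sqrt N : ℝ)/(N:ℝ))^q with hU
  set L : ℕ → ℝ := fun N =>
    (1 - (A2:ℝ)/(Nat.sqrt N : ℝ)) * (1 - (A1:ℝ)/(N:ℝ) - (Nat.sqrt N : ℝ)/(N:ℝ))^q with hL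
  -- limit facts
  have hsqrtT : Tendsto Nat.sqrt atTop atTop := by
    rw [Filter.tendsto_atTop_atTop]
    intro b
    exact ⟨b * b, fun a ha => Nat.le_sqrt.2 ha⟩
  have hmT : Tendsto (fun N : ℕ => (Nat.sqrt N : ℝ)) atTop atTop :=
    tendsto_natCast_atTop_atTop.comp hsqrtT
  have hNT : Tendsto (fun N : ℕ => (N : ℝ)) atTop atTop := tendsto_natCast_atTop_atTop
  have hc2m : Tendsto (fun N : ℕ => (A2:ℝ) / (Nat.sqrt N : ℝ)) atTop (nhds 0) :=
    Filter.Tendsto.div_atTop tendsto_const_nhds hmT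
  have hc1N : Tendsto (fun N : ℕ => (A1:ℝ) / (N:ℝ)) atTop (nhds 0) :=
    Filter.Tendsto.div_atTop tendsto_const_nhds hNT
  have hmN : Tendsto (fun N : ℕ => (Nat.sqrt N : ℝ)/(N:ℝ)) atTop (nhds 0) := by
    have hinv : Tendsto (fun N : ℕ => (1:ℝ) / (Nat.sqrt N : ℝ)) atTop (nhds 0) :=
      Filter.Tendsto.div_atTop tendsto_const_nhds hmT
    refine tendsto_of_tendsto_of_tendsto_of_le_of_le' tendsto_const_nhds hinv ?_ ?_
    · exact Filter.Eventually.of_forall fun N => by positivity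
    · filter_upwards [Filter.eventually_ge_atTop 1] with N hN
      have h1 : (1:ℕ) ≤ Nat.sqrt N := Nat.le_sqrt.2 (by omega)
      have hm0 : (0:ℝ) < (Nat.sqrt N : ℝ) := by exact_mod_cast h1
      have hN0 : (0:ℝ) < (N:ℝ) := by exact_mod_cast hN
      rw [div_le_div_iff₀ hN0 hm0, one_mul]
      have := Nat.sqrt_le' N
      rw [pow_two] at this
      exact_mod_cast this
  have hUt : Tendsto U atTop (nhds 1) := by
    have h1 : Tendsto (fun N : ℕ => 1 + (A2:ℝ)/(Nat.sqrt N : ℝ)) atTop (nhds 1) := by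
      have := (tendsto_const_nhds (x := (1:ℝ)) (f := atTop (α := ℕ))).add hc2m
      simpa using this
    have h2 : Tendsto (fun N : ℕ => 1 + (A1:ℝ)/(N:ℝ) + (Nat.sqrt N : ℝ)/(N:ℝ)) atTop (nhds 1) := by
      have := ((tendsto_const_nhds (x := (1:ℝ)) (f := atTop (α := ℕ))).add hc1N).add hmN
      simpa using this
    have := h1.mul (h2.pow q)
    simpa using this
  have hLt : Tendsto L atTop (nhds 1) := by
    have h1 : Tendsto (fun N : ℕ => 1 - (A2:ℝ)/(Nat.sqrt N : ℝ)) atTop (nhds 1) := by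
      have := (tendsto_const_nhds (x := (1:ℝ)) (f := atTop (α := ℕ))).sub hc2m
      simpa using this
    have h2 : Tendsto (fun N : ℕ => 1 - (A1:ℝ)/(N:ℝ) - (Nat.sqrt N : ℝ)/(N:ℝ)) atTop (nhds 1) := by
      have := ((tendsto_const_nhds (x := (1:ℝ)) (f := atTop (α := ℕ))).sub hc1N).sub hmN
      simpa using this
    have := h1.mul (h2.pow q)
    simpa using this
  -- eventual bounds
  have E1 : ∀ᶠ N : ℕ in atTop, A2 + 1 ≤ Nat.sqrt N := hsqrtT.eventually_ge_atTop _
  have E2 : ∀ᶠ N : ℕ in atTop, A1 + 1 + Nat.sqrt N ≤ N := by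
    rw [Filter.eventually_atTop]
    refine ⟨(A1 + 2) * (A1 + 2), fun N hN => ?_⟩
    have h1 : A1 + 2 ≤ Nat.sqrt N := Nat.le_sqrt.2 hN
    have h2 : Nat.sqrt N * Nat.sqrt N ≤ N := by
      have := Nat.sqrt_le' N
      rwa [pow_two] at this
    have h3 : (A1 + 2) * Nat.sqrt N ≤ N := le_trans (Nat.mul_le_mul_right _ h1) h2
    have h4 : A1 + 1 + Nat.sqrt N ≤ (A1 + 2) * Nat.sqrt N := by
      have h5 : 0 < Nat.sqrt N := by omega
      have h6 : A1 + 1 ≤ (A1 + 1) * Nat.sqrt N := Nat.le_mul_of_pos_right _ h5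
      have h7 : (A1 + 2) * Nat.sqrt N = (A1 + 1) * Nat.sqrt N + Nat.sqrt N := by ring
      omega
    omega
  have E3 : ∀ᶠ N : ℕ in atTop, 1 ≤ N := Filter.eventually_ge_atTop 1
  -- the squeeze
  have evU : ∀ᶠ N : ℕ in atTop, g N ≤ U N := by
    filter_upwards [E1, E3] with N h1 h3
    set M := Nat.sqrt N with hM
    have hM1 : 1 ≤ M := by omega
    have hnat := SchurAux.upper_nat S hpos hne hK1 hKrep N M hM1
    rw [← hσ, ← hPd, ← hr] at hnat
    have hnat2 : Pn * r.factorial * (M * (SchurAux.AA S N).card) ≤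
        r * ((M + σ + r) * (N + A1 + M) ^ q) := by
      refine le_trans hnat (Nat.mul_le_mul_left _ (Nat.mul_le_mul_left _ ?_))
      have hbase : (N + K - 1) + (M + σ + r) ≤ N + A1 + M := by
        rw [hA1]; omega
      rw [← hqd]
      exact Nat.pow_le_pow_left hbase q
    have hR : (Pn:ℝ) * (r.factorial:ℝ) * ((M:ℝ) * ((SchurAux.AA S N).card : ℝ)) ≤
        (r:ℝ) * (((M:ℝ) + σ + r) * ((N:ℝ) + A1 + (M:ℝ)) ^ q) := by
      have := (Nat.cast_le (α := ℝ)).mpr hnat2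
      push_cast at this
      convert this using 2 <;> push_cast <;> ring
    have hN0 : (0:ℝ) < (N:ℝ) := by exact_mod_cast h3
    have hM0 : (0:ℝ) < (M:ℝ) := by exact_mod_cast hM1
    have hr0 : (0:ℝ) < (r:ℝ) := by exact_mod_cast hr1
    rw [hg]
    dsimp only
    rw [div_le_iff₀ (by positivity)]
    refine le_of_mul_le_mul_left ?_ (show (0:ℝ) < (r:ℝ) * (M:ℝ) from mul_pos hr0 hM0)
    have hfact : (r.factorial : ℝ) = (r:ℝ) * (q.factorial:ℝ) := by
      have : r.factorial = r * q.factorial := by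
        rw [hrq, Nat.factorial_succ]
      exact_mod_cast this
    calc (r:ℝ) * M * (((SchurAux.AA S N).card : ℝ) * Pn * q.factorial)
        = (Pn:ℝ) * ((r:ℝ) * (q.factorial:ℝ)) * ((M:ℝ) * ((SchurAux.AA S N).card : ℝ)) := by
          ring
      _ = (Pn:ℝ) * (r.factorial:ℝ) * ((M:ℝ) * ((SchurAux.AA S N).card : ℝ)) := by
          rw [hfact]
      _ ≤ (r:ℝ) * (((M:ℝ) + σ + r) * ((N:ℝ) + A1 + (M:ℝ)) ^ q) := hR
      _ = (r:ℝ) * M * (U N * (N:ℝ)^q) := by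
          rw [hU]
          dsimp only
          rw [← hM, hA2R]
          rw [show (1 + (A1:ℝ)/(N:ℝ) + (M:ℝ)/(N:ℝ)) = ((N:ℝ)+A1+M)/N by
            rw [eq_div_iff hN0.ne', add_mul, add_mul, div_mul_cancel₀ _ hN0.ne',
              div_mul_cancel₀ _ hN0.ne', one_mul], div_pow]
          field_simp
          ring
  have evL : ∀ᶠ N : ℕ in atTop, L N ≤ g N := by
    filter_upwards [E1, E2, E3] with N h1 h2 h3
    set M := Nat.sqrt N with hM
    have hM1 : σ + r + 1 ≤ M := by rw [hA2] at h1; omega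
    have hNM : K + M ≤ N := by rw [hA1] at h2; omega
    have hnat := SchurAux.lower_nat S hpos hne hK1 hKrep N M hM1 hNM
    rw [← hσ, ← hPd, ← hr] at hnat
    have hN0 : (0:ℝ) < (N:ℝ) := by exact_mod_cast h3
    have hM0 : (0:ℝ) < (M:ℝ) := by
      have : 1 ≤ M := by omega
      exact_mod_cast this
    have hr0 : (0:ℝ) < (r:ℝ) := by exact_mod_cast hr1
    have hfact : (r.factorial : ℝ) = (r:ℝ) * (q.factorial:ℝ) := by
      have : r.factorial = r * q.factorial := by
        rw [hrq, Nat.factorial_succ]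
      exact_mod_cast this
    -- real versions of the two factors
    have hsub1 : (M:ℝ) - A2 ≤ ((M - (σ + r) : ℕ) : ℝ) := by
      have := SchurAux.cast_nat_sub_ge M (σ + r)
      rw [hA2R]
      push_cast at this ⊢
      linarith
    have hbase0 : (0:ℝ) ≤ (N:ℝ) - A1 - M := by
      have : ((A1 + 1 + M : ℕ) : ℝ) ≤ (N:ℝ) := Nat.cast_le.2 (by omega)
      push_cast at this
      linarith
    have hsub2 : (N:ℝ) - A1 - M ≤ (((N - K - M) + σ + r : ℕ) : ℝ) := by
      have hc : ((N - K - M : ℕ) : ℝ) = (N:ℝ) - K - M := by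
        rw [Nat.sub_sub, Nat.cast_sub (by omega : K + M ≤ N)]
        push_cast
        ring
      push_cast
      rw [hc, hA1R]
      have hσr : (0:ℝ) ≤ (σ:ℝ) + r := add_nonneg (Nat.cast_nonneg _) (Nat.cast_nonneg _)
      linarith
    have hL1 : ((M:ℝ) - A2) * ((N:ℝ) - A1 - M)^q ≤
        ((M - (σ + r) : ℕ) : ℝ) * ((((N - K - M) + σ + r : ℕ) : ℝ))^q := by
      refine mul_le_mul hsub1 (pow_le_pow_left₀ hbase0 hsub2 q) (by positivity) ?_
      positivity
    have hR : (r:ℝ) * (((M - (σ + r) : ℕ) : ℝ) * ((((N - K - M) + σ + r : ℕ) : ℝ))^q) ≤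
        (Pn:ℝ) * (r.factorial:ℝ) * ((M:ℝ) * ((SchurAux.AA S N).card : ℝ)) := by
      have := (Nat.cast_le (α := ℝ)).mpr hnat
      exact_mod_cast this
    rw [hg]
    dsimp only
    rw [le_div_iff₀ (by positivity)]
    refine le_of_mul_le_mul_left ?_ (show (0:ℝ) < (r:ℝ) * (M:ℝ) from mul_pos hr0 hM0)
    calc (r:ℝ) * M * (L N * (N:ℝ)^q)
        = (r:ℝ) * (((M:ℝ) - A2) * (((N:ℝ) - A1 - M))^q) := by
          rw [hL]
          dsimp only
          rw [← hM]
          rw [show (1 - (A1:ℝ)/(N:ℝ) - (M:ℝ)/(N:ℝ)) = ((N:ℝ)-A1-M)/N by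
            rw [eq_div_iff hN0.ne', sub_mul, sub_mul, div_mul_cancel₀ _ hN0.ne',
              div_mul_cancel₀ _ hN0.ne', one_mul], div_pow]
          field_simp
      _ ≤ (r:ℝ) * (((M - (σ + r) : ℕ) : ℝ) * ((((N - K - M) + σ + r : ℕ) : ℝ))^q) := by
          exact mul_le_mul_of_nonneg_left hL1 hr0.le
      _ ≤ (Pn:ℝ) * (r.factorial:ℝ) * ((M:ℝ) * ((SchurAux.AA S N).card : ℝ)) := hR
      _ = (r:ℝ) * M * (((SchurAux.AA S N).card : ℝ) * Pn * q.factorial) := by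
          rw [hfact]
          ring
  have hgt : Tendsto g atTop (nhds 1) :=
    tendsto_of_tendsto_of_tendsto_of_le_of_le' hLt hUt evL evU
  exact hgt.congr hfun
end

section
/- For n ≥ 3, the limit as N → ∞ of n! · T(N, n) / C(N-1, n-1) equals n! / ∏_{j=2}^{n} (F_{j+2} - 1), where T(N, n) is the number of n-tuples (a_1, …, a_n) of positive integers with a_1 ≥ ⋯ ≥ a_n, ∑ a_i = N, and a_i ≥ a_{i+1} + a_{i+2} for all 1 ≤ i ≤ n-2. -/
open Finset Nat Filter

section StickBreaking

variable {n : ℕ}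

/-- Lattice points of the weighted simplex `∑ w k * d k ≤ M` as a Finset. -/
def simplexF (r M : ℕ) (w : Fin r → ℕ) : Finset (Fin r → ℕ) :=
  (Fintype.piFinset fun _ => Finset.range (M + 1)).filter fun d => ∑ k, w k * d k ≤ M

lemma mem_simplexF {r M : ℕ} {w : Fin r → ℕ} (hw : ∀ k, 1 ≤ w k) (d : Fin r → ℕ) :
    d ∈ simplexF r M w ↔ ∑ k, w k * d k ≤ M := by
  constructor
  · intro h; exact (Finset.mem_filter.1 h).2
  · intro h
    refine Finset.mem_filter.2 ⟨Fintype.mem_piFinset.2 fun k => Finset.mem_range.2 ?_, h⟩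
    have h1 : w k * d k ≤ M := le_trans (Finset.single_le_sum (f := fun k => w k * d k)
      (fun _ _ => Nat.zero_le _) (Finset.mem_univ k)) h
    have := hw k
    nlinarith

lemma card_simplexF_one (r M : ℕ) : (simplexF r M (fun _ => 1)).card = (M + r).choose r := by
  induction r generalizing M with
  | zero =>
    simp only [Nat.choose_zero_right]
    refine Finset.card_eq_one.2 ⟨(fun k => 0), ?_⟩
    ext d
    simp only [Finset.mem_singleton]
    constructor
    · intro _; funext k; exact absurd k.2 (by omega)
    · rintro rfl
      exact (mem_simplexF (fun k => le_refl _) _).2 (by simp)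
  | succ r ih =>
    have hsplit : simplexF (r+1) M (fun _ => 1) =
        (Finset.range (M+1)).biUnion
          (fun t => (simplexF r (M - t) (fun _ => 1)).image (fun e : Fin r → ℕ => (Fin.cons t e : Fin (r+1) → ℕ))) := by
      ext d
      rw [mem_simplexF (fun _ => le_refl _)]
      simp only [Finset.mem_biUnion, Finset.mem_range, Finset.mem_image]
      constructor
      · intro h
        simp only [one_mul] at h
        rw [Fin.sum_univ_succ] at h
        refine ⟨d 0, by omega, Fin.tail d, ?_, Fin.cons_self_tail d⟩
        rw [mem_simplexF (fun _ => le_refl _)]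
        simp only [one_mul]
        have ht : ∀ k : Fin r, Fin.tail d k = d k.succ := fun k => rfl
        simp only [ht]
        omega
      · rintro ⟨t, ht, e, he, rfl⟩
        rw [mem_simplexF (fun _ => le_refl _)] at he
        simp only [one_mul] at he ⊢
        rw [Fin.sum_univ_succ]
        simp only [Fin.cons_zero, Fin.cons_succ]
        omega
    rw [hsplit, Finset.card_biUnion]
    · have : ∀ t ∈ Finset.range (M+1),
          ((simplexF r (M - t) (fun _ => 1)).image (fun e : Fin r → ℕ => (Fin.cons t e : Fin (r+1) → ℕ))).card = (M - t + r).choose r := by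
        intro t _
        have hinj : Function.Injective (fun e : Fin r → ℕ => (Fin.cons t e : Fin (r+1) → ℕ)) := by
          intro a b hab
          funext k
          have := congrFun hab k.succ
          simpa [Fin.cons_succ] using this
        rw [Finset.card_image_of_injective _ hinj, ih]
      rw [Finset.sum_congr rfl this]
      have := Finset.sum_range_reflect (fun t => (t + r).choose r) (M+1)
      simp only [add_tsub_cancel_right] at this
      calc ∑ t ∈ Finset.range (M+1), (M - t + r).choose r
          = ∑ t ∈ Finset.range (M+1), (t + r).choose r := this
        _ = (M + r + 1).choose (r + 1) := Nat.sum_range_add_choose M r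
        _ = (M + (r+1)).choose (r+1) := by ring_nf
    · intro t _ t' _ htt'
      refine Finset.disjoint_left.2 fun d hd hd' => ?_
      simp only [Finset.mem_image] at hd hd'
      obtain ⟨e, _, rfl⟩ := hd
      obtain ⟨e', _, h⟩ := hd'
      have h0 := congrFun h 0
      simp only [Fin.cons_zero] at h0
      exact htt' h0.symm

lemma simplexF_lower {r M : ℕ} {w : Fin r → ℕ} (hw : ∀ k, 1 ≤ w k) :
    (M + r).choose r ≤ (simplexF r M w).card * ∏ k, w k := by
  rw [← card_simplexF_one r M]
  have : (simplexF r M w).card * ∏ k, w k =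
      ((simplexF r M w) ×ˢ Fintype.piFinset fun k => Finset.range (w k)).card := by
    rw [Finset.card_product, Fintype.card_piFinset]
    simp
  rw [this]
  refine Finset.card_le_card_of_injOn
    (fun d => (fun k => d k / w k, fun k => d k % w k)) ?_ ?_
  · intro d hd
    rw [Finset.mem_coe, mem_simplexF (fun _ => le_refl _)] at hd
    simp only [one_mul] at hd
    refine Finset.mem_product.2 ⟨(mem_simplexF hw _).2 ?_, Fintype.mem_piFinset.2 fun k =>
      Finset.mem_range.2 (Nat.mod_lt _ (hw k))⟩
    calc ∑ k, w k * (d k / w k) ≤ ∑ k, d k :=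
          Finset.sum_le_sum fun k _ => by rw [mul_comm]; exact Nat.div_mul_le_self _ _
      _ ≤ M := hd
  · intro d _ d' _ h
    simp only [Prod.mk.injEq] at h
    funext k
    have h1 := congrFun h.1 k
    have h2 := congrFun h.2 k
    calc d k = w k * (d k / w k) + d k % w k := (Nat.div_add_mod _ _).symm
      _ = w k * (d' k / w k) + d' k % w k := by rw [h1, h2]
      _ = d' k := Nat.div_add_mod _ _

lemma simplexF_upper {r M : ℕ} {w : Fin r → ℕ} (hw : ∀ k, 1 ≤ w k) :
    (simplexF r M w).card * ∏ k, w k ≤ (M + (∑ k, (w k - 1)) + r).choose r := by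
  rw [← card_simplexF_one r (M + ∑ k, (w k - 1))]
  have : (simplexF r M w).card * ∏ k, w k =
      ((simplexF r M w) ×ˢ Fintype.piFinset fun k => Finset.range (w k)).card := by
    rw [Finset.card_product, Fintype.card_piFinset]; simp
  rw [this]
  refine Finset.card_le_card_of_injOn (fun p => fun k => w k * p.1 k + p.2 k) ?_ ?_
  · rintro ⟨c, e⟩ hp
    obtain ⟨hc, he⟩ := Finset.mem_product.1 hp
    rw [mem_simplexF hw] at hc
    have he' : ∀ k, e k < w k := fun k =>
      Finset.mem_range.1 (Fintype.mem_piFinset.1 he k)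
    rw [Finset.mem_coe, mem_simplexF (fun _ => le_refl _)]
    have hc' : ∑ k, w k * c k ≤ M := hc
    show ∑ k, (fun _ => 1 : Fin r → ℕ) k * (w k * c k + e k) ≤ _
    simp only [one_mul]
    rw [Finset.sum_add_distrib]
    have : ∑ k, e k ≤ ∑ k, (w k - 1) :=
      Finset.sum_le_sum fun k _ => by have := he' k; omega
    omega
  · rintro ⟨c, e⟩ hp ⟨c', e'⟩ hp' h
    obtain ⟨_, he⟩ := Finset.mem_product.1 hp
    obtain ⟨_, he'⟩ := Finset.mem_product.1 hp'
    have hek : ∀ k, e k < w k := fun k => Finset.mem_range.1 (Fintype.mem_piFinset.1 he k)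
    have hek' : ∀ k, e' k < w k := fun k => Finset.mem_range.1 (Fintype.mem_piFinset.1 he' k)
    have key : ∀ k, c k = c' k ∧ e k = e' k := by
      intro k
      have hk := congrFun h k
      simp only at hk
      have h1 : (w k * c k + e k) / w k = c k := by
        rw [Nat.mul_add_div (hw k), Nat.div_eq_of_lt (hek k), add_zero]
      have h2 : (w k * c' k + e' k) / w k = c' k := by
        rw [Nat.mul_add_div (hw k), Nat.div_eq_of_lt (hek' k), add_zero]
      have hc : c k = c' k := by rw [← h1, ← h2, hk]
      refine ⟨hc, ?_⟩
      rw [hc] at hk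
      omega
    exact Prod.ext (funext fun k => (key k).1) (funext fun k => (key k).2)

variable {n : ℕ}

/-- `phi c i = ∑_{k ≥ i} c k · fib (k - i + 1)`. -/
def phi (n : ℕ) (c : Fin n → ℕ) (i : ℕ) : ℕ :=
  ∑ k : Fin n, if i ≤ k.val then c k * Nat.fib (k.val - i + 1) else 0

lemma phi_zero (c : Fin n → ℕ) {i : ℕ} (h : n ≤ i) : phi n c i = 0 := by
  refine Finset.sum_eq_zero fun k _ => ?_
  rw [if_neg]
  omega

lemma phi_rec (c : Fin n → ℕ) (i : ℕ) :
    phi n c i = (if h : i < n then c ⟨i, h⟩ else 0) + phi n c (i + 1) + phi n c (i + 2) := by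
  have hd : (if h : i < n then c ⟨i, h⟩ else 0)
      = ∑ k : Fin n, if k.val = i then c k else 0 := by
    by_cases h : i < n
    · rw [dif_pos h]
      have : ∀ k : Fin n, (if k.val = i then c k else 0) =
          (if k = ⟨i, h⟩ then c k else 0) := by
        intro k
        congr 1
        simp [Fin.ext_iff]
      rw [Finset.sum_congr rfl fun k _ => this k, Finset.sum_ite_eq' Finset.univ ⟨i, h⟩ c]
      simp
    · rw [dif_neg h]
      refine (Finset.sum_eq_zero fun k _ => ?_).symm
      rw [if_neg]
      omega
  rw [hd]
  unfold phi
  rw [← Finset.sum_add_distrib, ← Finset.sum_add_distrib]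
  refine Finset.sum_congr rfl fun k _ => ?_
  rcases Nat.lt_or_ge k.val i with hk | hk
  · rw [if_neg (by omega), if_neg (by omega), if_neg (by omega), if_neg (by omega)]
  rcases Nat.eq_or_lt_of_le hk with hk0 | hk1
  · rw [if_pos (by omega), if_pos hk0.symm, if_neg (by omega), if_neg (by omega)]
    have : k.val - i + 1 = 1 := by omega
    rw [this]
    simp
  rcases Nat.eq_or_lt_of_le hk1 with hk1' | hk2
  · rw [if_pos (by omega), if_neg (by omega), if_pos (by omega), if_neg (by omega)]
    have h1 : k.val - i + 1 = 2 := by omega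
    have h2 : k.val - (i+1) + 1 = 1 := by omega
    rw [h1, h2]
    simp
  · have h2 : i + 2 ≤ k.val := hk2
    rw [if_pos (by omega), if_neg (by omega), if_pos (by omega), if_pos (by omega)]
    have e1 : k.val - i + 1 = (k.val - (i+2) + 1) + 2 := by omega
    have e2 : k.val - (i+1) + 1 = (k.val - (i+2) + 1) + 1 := by omega
    rw [e1, e2, Nat.fib_add_two, Nat.mul_add]
    ring

lemma phi_sum (c : Fin n → ℕ) :
    ∑ i : Fin n, phi n c i.val = ∑ k : Fin n, c k * (Nat.fib (k.val + 3) - 1) := by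
  unfold phi
  rw [Finset.sum_comm]
  refine Finset.sum_congr rfl fun k _ => ?_
  rw [Fin.sum_univ_eq_sum_range (fun j => if j ≤ k.val then c k * Nat.fib (k.val - j + 1) else 0)]
  have hsub : Finset.range (k.val + 1) ⊆ Finset.range n := by
    intro x hx
    simp only [Finset.mem_range] at hx ⊢
    have := k.isLt
    omega
  rw [← Finset.sum_subset hsub (fun x _ hx => by
    rw [if_neg]; simp only [Finset.mem_range] at hx; omega)]
  have : ∀ j ∈ Finset.range (k.val + 1),
      (if j ≤ k.val then c k * Nat.fib (k.val - j + 1) else 0)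
        = c k * Nat.fib (k.val - j + 1) := by
    intro j hj
    rw [if_pos]
    simp only [Finset.mem_range] at hj
    omega
  rw [Finset.sum_congr rfl this, ← Finset.mul_sum]
  congr 1
  have hrefl := Finset.sum_range_reflect (fun j => Nat.fib (j + 1)) (k.val + 1)
  simp only [add_tsub_cancel_right] at hrefl
  rw [hrefl]
  have h2 : ∑ j ∈ Finset.range (k.val + 1), Nat.fib (j + 1)
      = ∑ j ∈ Finset.range (k.val + 2), Nat.fib j := by
    rw [Finset.sum_range_succ' (fun j => Nat.fib j) (k.val + 1)]
    simp
  rw [h2]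
  have h3 := Nat.fib_succ_eq_succ_sum (k.val + 2)
  have h4 : k.val + 2 + 1 = k.val + 3 := by omega
  rw [h4] at h3
  omega

lemma phi_anti (c : Fin n → ℕ) {i j : ℕ} (hij : i ≤ j) : phi n c j ≤ phi n c i := by
  refine Finset.sum_le_sum fun k _ => ?_
  by_cases h : j ≤ k.val
  · rw [if_pos h, if_pos (by omega)]
    exact Nat.mul_le_mul_left _ (Nat.fib_mono (by omega))
  · rw [if_neg h]
    exact Nat.zero_le _

lemma phi_pos (c : Fin n → ℕ) (hc : ∀ h : 0 < n, 1 ≤ c ⟨n - 1, by omega⟩) {i : ℕ}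
    (hi : i < n) : 1 ≤ phi n c i := by
  have hn : 0 < n := by omega
  calc 1 ≤ (if i ≤ n - 1 then c ⟨n - 1, by omega⟩ * Nat.fib (n - 1 - i + 1) else 0) := by
        rw [if_pos (by omega)]
        have h1 := hc hn
        have h2 : 0 < Nat.fib (n - 1 - i + 1) := Nat.fib_pos.2 (by omega)
        exact Nat.one_le_iff_ne_zero.2 (by positivity)
    _ ≤ phi n c i := by
        have := Finset.single_le_sum
          (f := fun k : Fin n => if i ≤ k.val then c k * Nat.fib (k.val - i + 1) else 0)
          (fun k _ => Nat.zero_le _) (Finset.mem_univ (⟨n - 1, by omega⟩ : Fin n))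
        exact this

variable {n : ℕ}

def psi (n : ℕ) (a : Fin n → ℕ) (i : ℕ) : ℕ :=
  if h2 : i + 2 < n then a ⟨i, Nat.lt_of_le_of_lt (Nat.le_add_right i 2) h2⟩ - a ⟨i + 1, Nat.lt_of_le_of_lt (Nat.le_add_right (i + 1) 1) h2⟩ - a ⟨i + 2, h2⟩
  else if h1 : i + 1 < n then a ⟨i, Nat.lt_of_le_of_lt (Nat.le_add_right i 1) h1⟩ - a ⟨i + 1, h1⟩
  else if h0 : i < n then a ⟨i, h0⟩ else 0

def phiF (n : ℕ) (c : Fin n → ℕ) : Fin n → ℕ := fun i => phi n c i.val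
def psiF (n : ℕ) (a : Fin n → ℕ) : Fin n → ℕ := fun i => psi n a i.val

lemma psiF_phiF (c : Fin n → ℕ) : psiF n (phiF n c) = c := by
  funext i
  have hi : i.val < n := i.isLt
  have hrec := phi_rec c i.val
  rw [dif_pos hi] at hrec
  have hcongr : c ⟨i.val, hi⟩ = c i := by congr
  unfold psiF psi phiF
  simp only [Fin.val_mk]
  by_cases h2 : i.val + 2 < n
  · rw [dif_pos h2]
    have r1 := phi_rec c (i.val + 1)
    omega
  · by_cases h1 : i.val + 1 < n
    · rw [dif_neg h2, dif_pos h1]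
      have hz : phi n c (i.val + 2) = 0 := phi_zero c (by omega)
      omega
    · rw [dif_neg h2, dif_neg h1, dif_pos hi]
      have hz1 : phi n c (i.val + 1) = 0 := phi_zero c (by omega)
      have hz2 : phi n c (i.val + 2) = 0 := phi_zero c (by omega)
      omega

lemma phiF_injective : Function.Injective (phiF n) :=
  Function.LeftInverse.injective psiF_phiF

lemma phiF_psiF (a : Fin n → ℕ)
    (hmono : ∀ i j : Fin n, i ≤ j → a j ≤ a i)
    (htri : ∀ i : ℕ, ∀ h : i + 2 < n,
      a ⟨i + 1, Nat.lt_of_le_of_lt (Nat.le_add_right (i + 1) 1) h⟩ + a ⟨i + 2, h⟩ ≤ a ⟨i, Nat.lt_of_le_of_lt (Nat.le_add_right i 2) h⟩) :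
    phiF n (psiF n a) = a := by
  have key : ∀ d i, n ≤ i + d →
      phi n (psiF n a) i = if h : i < n then a ⟨i, h⟩ else 0 := by
    intro d
    induction d with
    | zero =>
      intro i hi
      rw [phi_zero _ (by omega), dif_neg (by omega)]
    | succ d ih =>
      intro i hi
      by_cases hin : i < n
      · rw [dif_pos hin, phi_rec, ih (i+1) (by omega), ih (i+2) (by omega), dif_pos hin]
        show psiF n a ⟨i, hin⟩ + _ + _ = _
        unfold psiF psi
        simp only
        by_cases h2 : i + 2 < n
        · rw [dif_pos h2, dif_pos (by omega), dif_pos (by omega)]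
          have ht := htri i h2
          omega
        · by_cases h1 : i + 1 < n
          · rw [dif_neg h2, dif_pos h1, dif_pos h1, dif_neg (by omega)]
            have hm := hmono ⟨i, hin⟩ ⟨i+1, h1⟩ (by simp [Fin.le_def])
            omega
          · rw [dif_neg h2, dif_neg h1, dif_pos hin, dif_neg h1, dif_neg (by omega)]
            omega
      · rw [phi_zero _ (by omega), dif_neg hin]
  funext i
  have := key n i.val (by omega)
  rw [dif_pos i.isLt] at this
  show phi n (psiF n a) i.val = a i
  rw [this]

lemma ncard_A_eq (hn : 3 ≤ n) (N : ℕ) :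
    Set.ncard {a : Fin n → ℕ | (∀ i, 1 ≤ a i) ∧
        (∀ i j : Fin n, i ≤ j → a j ≤ a i) ∧ (∑ i, a i) = N ∧
        ∀ i : ℕ, ∀ h : i + 2 < n,
          a ⟨i + 1, Nat.lt_of_le_of_lt (Nat.le_add_right (i + 1) 1) h⟩ + a ⟨i + 2, h⟩ ≤ a ⟨i, Nat.lt_of_le_of_lt (Nat.le_add_right i 2) h⟩} =
    Set.ncard {c : Fin n → ℕ | 1 ≤ c ⟨n - 1, by omega⟩ ∧
        ∑ k : Fin n, c k * (Nat.fib (k.val + 3) - 1) = N} := by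
  set A := {a : Fin n → ℕ | (∀ i, 1 ≤ a i) ∧
        (∀ i j : Fin n, i ≤ j → a j ≤ a i) ∧ (∑ i, a i) = N ∧
        ∀ i : ℕ, ∀ h : i + 2 < n,
          a ⟨i + 1, Nat.lt_of_le_of_lt (Nat.le_add_right (i + 1) 1) h⟩ + a ⟨i + 2, h⟩ ≤ a ⟨i, Nat.lt_of_le_of_lt (Nat.le_add_right i 2) h⟩} with hA
  set S := {c : Fin n → ℕ | 1 ≤ c ⟨n - 1, by omega⟩ ∧
        ∑ k : Fin n, c k * (Nat.fib (k.val + 3) - 1) = N} with hS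
  have himg : A = phiF n '' S := by
    ext a
    constructor
    · intro ha
      obtain ⟨hpos, hmono, hsum, htri⟩ := ha
      refine ⟨psiF n a, ?_, phiF_psiF a hmono htri⟩
      constructor
      · show 1 ≤ psi n a (n-1)
        unfold psi
        rw [dif_neg (by omega), dif_neg (by omega), dif_pos (by omega)]
        exact hpos _
      · rw [← phi_sum (psiF n a)]
        have : ∀ i : Fin n, phi n (psiF n a) i.val = a i := by
          intro i
          exact congrFun (phiF_psiF a hmono htri) i
        rw [Finset.sum_congr rfl fun i _ => this i]
        exact hsum
    · rintro ⟨c, ⟨hc1, hc2⟩, rfl⟩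
      refine ⟨?_, ?_, ?_, ?_⟩
      · intro i
        exact phi_pos c (fun h => hc1) i.isLt
      · intro i j hij
        exact phi_anti c (Fin.le_def.1 hij)
      · rw [← hc2, ← phi_sum c]
        rfl
      · intro i h
        show phi n c (i+1) + phi n c (i+2) ≤ phi n c i
        have := phi_rec c i
        omega
  rw [himg, Set.ncard_image_of_injOn (Function.Injective.injOn phiF_injective)]

lemma ncard_S_eq (m N : ℕ) (hN : Nat.fib (m + 5) - 1 ≤ N) :
    Set.ncard {c : Fin (m + 3) → ℕ | 1 ≤ c ⟨m + 3 - 1, by omega⟩ ∧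
        ∑ k : Fin (m + 3), c k * (Nat.fib (k.val + 3) - 1) = N} =
    (simplexF (m + 2) (N - (Nat.fib (m + 5) - 1))
      (fun k => Nat.fib (k.val + 4) - 1)).card := by
  set w : Fin (m + 2) → ℕ := fun k => Nat.fib (k.val + 4) - 1 with hw
  have hw1 : ∀ k, 1 ≤ w k := by
    intro k
    have : 2 ≤ Nat.fib (k.val + 4) := by
      calc 2 = Nat.fib 3 := rfl
        _ ≤ Nat.fib (k.val + 4) := Nat.fib_mono (by omega)
    simp only [hw]
    omega
  set M := N - (Nat.fib (m + 5) - 1) with hM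
  set G : (Fin (m + 2) → ℕ) → (Fin (m + 3) → ℕ) := fun c' =>
    Fin.cons (N - (∑ k, w k * c' k + (Nat.fib (m + 5) - 1)))
      (fun k : Fin (m + 2) => c' k + if k.val = m + 1 then 1 else 0) with hG
  have hGinj : Function.Injective G := by
    intro c1 c2 h
    funext k
    have := congrFun h k.succ
    simp only [hG, Fin.cons_succ] at this
    omega
  -- sum computation for G c'
  have hsum : ∀ c' : Fin (m + 2) → ℕ,
      ∑ k : Fin (m + 3), G c' k * (Nat.fib (k.val + 3) - 1)
        = (N - (∑ k, w k * c' k + (Nat.fib (m + 5) - 1)))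
          + (∑ k, w k * c' k + (Nat.fib (m + 5) - 1)) := by
    intro c'
    rw [Fin.sum_univ_succ]
    simp only [hG, Fin.cons_zero, Fin.cons_succ, Fin.val_zero, Fin.val_succ]
    congr 1
    · show _ * (Nat.fib 3 - 1) = _
      norm_num
    · have : ∀ k : Fin (m + 2),
          (c' k + if k.val = m + 1 then 1 else 0) * (Nat.fib (k.val + 1 + 3) - 1)
          = w k * c' k + (if k.val = m + 1 then Nat.fib (m + 5) - 1 else 0) := by
        intro k
        by_cases hk : k.val = m + 1
        · rw [if_pos hk, if_pos hk, hk]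
          show (c' k + 1) * (Nat.fib (m + 1 + 1 + 3) - 1) = _
          have : m + 1 + 1 + 3 = m + 5 := by omega
          rw [this]
          simp only [hw, hk]
          have : m + 1 + 4 = m + 5 := by omega
          rw [this]
          ring
        · rw [if_neg hk, if_neg hk, add_zero, add_zero]
          simp only [hw]
          have : k.val + 1 + 3 = k.val + 4 := by omega
          rw [this]
          ring
      rw [Finset.sum_congr rfl fun k _ => this k, Finset.sum_add_distrib]
      congr 1
      have : ∀ k : Fin (m + 2), (if k.val = m + 1 then Nat.fib (m + 5) - 1 else 0)
          = (if k = (⟨m + 1, by omega⟩ : Fin (m + 2)) then Nat.fib (m + 5) - 1 else 0) := by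
        intro k
        congr 1
        simp [Fin.ext_iff]
      rw [Finset.sum_congr rfl fun k _ => this k,
        Finset.sum_ite_eq' Finset.univ (⟨m + 1, by omega⟩ : Fin (m + 2))
          (fun _ => Nat.fib (m + 5) - 1)]
      simp
  have himg : {c : Fin (m + 3) → ℕ | 1 ≤ c ⟨m + 3 - 1, by omega⟩ ∧
        ∑ k : Fin (m + 3), c k * (Nat.fib (k.val + 3) - 1) = N}
      = G '' (simplexF (m + 2) M w : Set (Fin (m + 2) → ℕ)) := by
    ext c
    simp only [Set.mem_setOf_eq, Set.mem_image, Finset.mem_coe]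
    constructor
    · rintro ⟨hc1, hc2⟩
      set c' : Fin (m + 2) → ℕ :=
        fun k => c k.succ - if k.val = m + 1 then 1 else 0 with hc'
      have hcsucc : ∀ k : Fin (m + 2), c' k + (if k.val = m + 1 then 1 else 0) = c k.succ := by
        intro k
        by_cases hk : k.val = m + 1
        · simp only [hc', if_pos hk]
          have : k.succ = (⟨m + 3 - 1, by omega⟩ : Fin (m + 3)) := by
            simp [Fin.ext_iff]
            omega
          rw [this]
          omega
        · simp only [hc', if_neg hk]
          omega
      have hGc : G c' = c := by
        -- tail agreement
        have htail : ∀ k : Fin (m + 2), G c' k.succ = c k.succ := by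
          intro k
          simp only [hG, Fin.cons_succ]
          exact hcsucc k
        -- sum equality: use hsum with this c'
        have h2 := hsum c'
        have h3 : ∑ k : Fin (m + 3), G c' k * (Nat.fib (k.val + 3) - 1)
            = G c' 0 * (Nat.fib 3 - 1) + ∑ k : Fin (m + 2),
              G c' k.succ * (Nat.fib (k.val + 1 + 3) - 1) := by
          rw [Fin.sum_univ_succ]
          rfl
        have h4 : ∑ k : Fin (m + 3), c k * (Nat.fib (k.val + 3) - 1)
            = c 0 * (Nat.fib 3 - 1) + ∑ k : Fin (m + 2),
              c k.succ * (Nat.fib (k.val + 1 + 3) - 1) := by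
          rw [Fin.sum_univ_succ]
          rfl
        have htailsum : ∑ k : Fin (m + 2), G c' k.succ * (Nat.fib (k.val + 1 + 3) - 1)
            = ∑ k : Fin (m + 2), c k.succ * (Nat.fib (k.val + 1 + 3) - 1) :=
          Finset.sum_congr rfl fun k _ => by rw [htail k]
        -- head agreement
        have hfib3 : Nat.fib 3 - 1 = 1 := rfl
        have hG0 : G c' 0 = N - (∑ k, w k * c' k + (Nat.fib (m + 5) - 1)) := by
          simp only [hG, Fin.cons_zero]
        have h2' := h2
        rw [h3, htailsum, hfib3, mul_one] at h2'
        rw [h4, hfib3, mul_one] at hc2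
        have h0 : G c' 0 = c 0 := by omega
        funext k
        refine Fin.cases ?_ ?_ k
        · exact h0
        · exact htail
      refine ⟨c', ?_, hGc⟩
      rw [mem_simplexF hw1]
      -- from the total sum = N
      have h2 := hsum c'
      rw [hGc] at h2
      rw [hc2] at h2
      omega
    · rintro ⟨c', hc', rfl⟩
      rw [mem_simplexF hw1] at hc'
      have hle : ∑ k, w k * c' k + (Nat.fib (m + 5) - 1) ≤ N := by omega
      constructor
      · have : (⟨m + 3 - 1, by omega⟩ : Fin (m + 3))
            = Fin.succ (⟨m + 1, by omega⟩ : Fin (m + 2)) := by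
          simp [Fin.ext_iff]
        rw [this]
        simp only [hG, Fin.cons_succ]
        simp
      · rw [hsum c']
        omega
  rw [himg, Set.ncard_image_of_injOn (Function.Injective.injOn hGinj), Set.ncard_coe_finset]

lemma tendsto_choose_div_pow (c d r : ℕ) :
    Tendsto (fun N : ℕ => ((N - c + d).choose r : ℝ) / (N : ℝ) ^ r) atTop
      (nhds (1 / (r.factorial : ℝ))) := by
  have hfac : Tendsto (fun N : ℕ =>
      (∏ i ∈ Finset.range r, (((N : ℝ) + ((d : ℝ) - (c : ℝ) - (i : ℝ))) / (N : ℝ)))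
        * (1 / (r.factorial : ℝ))) atTop (nhds (1 / (r.factorial : ℝ))) := by
    have h1 : Tendsto (fun N : ℕ =>
        ∏ i ∈ Finset.range r, (((N : ℝ) + ((d : ℝ) - (c : ℝ) - (i : ℝ))) / (N : ℝ)))
        atTop (nhds 1) := by
      have : Tendsto (fun N : ℕ =>
          ∏ i ∈ Finset.range r, (((N : ℝ) + ((d : ℝ) - (c : ℝ) - (i : ℝ))) / (N : ℝ)))
          atTop (nhds (∏ i ∈ Finset.range r, 1)) := by
        refine tendsto_finset_prod _ fun i _ => ?_
        have hN : Tendsto (fun N : ℕ => (N : ℝ)) atTop atTop := tendsto_natCast_atTop_atTop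
        have hinv : Tendsto (fun N : ℕ => ((d : ℝ) - (c : ℝ) - (i : ℝ)) / (N : ℝ)) atTop
            (nhds 0) := by
          exact Tendsto.div_atTop tendsto_const_nhds hN
        have heq : ∀ᶠ N : ℕ in atTop,
            1 + ((d : ℝ) - (c : ℝ) - (i : ℝ)) / (N : ℝ)
              = ((N : ℝ) + ((d : ℝ) - (c : ℝ) - (i : ℝ))) / (N : ℝ) := by
          filter_upwards [eventually_gt_atTop 0] with N hN0
          have : (N : ℝ) ≠ 0 := Nat.cast_ne_zero.2 (by omega)
          field_simp
        refine Tendsto.congr' heq ?_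
        have := Tendsto.const_add (1 : ℝ) hinv
        simpa using this
      simpa using this
    have := h1.mul (tendsto_const_nhds (x := 1 / (r.factorial : ℝ)))
    simpa using this
  refine Tendsto.congr' ?_ hfac
  filter_upwards [eventually_ge_atTop (c + d + r + 1)] with N hN
  have hN0 : (0 : ℝ) < (N : ℝ) := by exact_mod_cast Nat.pos_of_ne_zero (by omega)
  have hchoose : ((N - c + d).choose r : ℝ) * (r.factorial : ℝ)
      = ∏ i ∈ Finset.range r, ((N : ℝ) + ((d : ℝ) - (c : ℝ) - (i : ℝ))) := by
    have hdesc : (N - c + d).choose r * r.factorial = (N - c + d).descFactorial r := by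
      rw [Nat.descFactorial_eq_factorial_mul_choose]
      ring_nf
    have : ((N - c + d).descFactorial r : ℝ)
        = ∏ i ∈ Finset.range r, ((N : ℝ) + ((d : ℝ) - (c : ℝ) - (i : ℝ))) := by
      rw [Nat.descFactorial_eq_prod_range, Nat.cast_prod]
      refine Finset.prod_congr rfl fun i hi => ?_
      have hi' : i < r := Finset.mem_range.1 hi
      have : ((N - c + d - i : ℕ) : ℝ) = (N : ℝ) - (c : ℝ) + (d : ℝ) - (i : ℝ) := by
        have h1 : c ≤ N := by omega
        have h2 : i ≤ N - c + d := by omega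
        push_cast [Nat.cast_sub h2, Nat.cast_sub h1]
        ring
      rw [this]
      ring
    rw [← this, ← hdesc]
    push_cast
    ring
  have hfacne : (r.factorial : ℝ) ≠ 0 := by positivity
  rw [Finset.prod_div_distrib, Finset.prod_const, Finset.card_range]
  have h2 : ((N - c + d).choose r : ℝ)
      = (∏ i ∈ Finset.range r, ((N : ℝ) + ((d : ℝ) - (c : ℝ) - (i : ℝ)))) / (r.factorial : ℝ) := by
    rw [← hchoose]
    field_simp
  rw [h2]
  ring

lemma tendsto_choose_ratio (r c d : ℕ) :
    Tendsto (fun N : ℕ => ((N - c + d).choose r : ℝ) / (((N - 1).choose r : ℝ)))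
      atTop (nhds 1) := by
  have h1 := tendsto_choose_div_pow c d r
  have h2 := tendsto_choose_div_pow 1 0 r
  have hne : (1 : ℝ) / (r.factorial : ℝ) ≠ 0 := by positivity
  have h3 := h1.div h2 hne
  rw [div_self hne] at h3
  refine Tendsto.congr' ?_ h3
  filter_upwards [eventually_ge_atTop (r + c + 2)] with N hN
  have hC : 0 < (N - 1).choose r := Nat.choose_pos (by omega)
  have hCne : (((N - 1).choose r : ℕ) : ℝ) ≠ 0 := by
    exact_mod_cast Nat.pos_iff_ne_zero.1 hC
  have hNpos : (0 : ℝ) < (N : ℝ) := by exact_mod_cast Nat.pos_of_ne_zero (by omega)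
  have hNr : ((N : ℝ)) ^ r ≠ 0 := by positivity
  show ((N - c + d).choose r : ℝ) / (N : ℝ) ^ r
      / (((N - 1 + 0).choose r : ℝ) / (N : ℝ) ^ r) = _
  rw [add_zero]
  field_simp

end StickBreaking

theorem prob_no_triangle_n_pieces (n : ℕ) (hn : 3 ≤ n) :
    Filter.Tendsto (fun N : ℕ =>
      (Nat.factorial n : ℝ) * (Set.ncard {a : Fin n → ℕ | (∀ i, 1 ≤ a i) ∧
          (∀ i j : Fin n, i ≤ j → a j ≤ a i) ∧ (∑ i, a i) = N ∧
          ∀ i : ℕ, ∀ h : i + 2 < n,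
            a ⟨i + 1, by omega⟩ + a ⟨i + 2, by omega⟩ ≤ a ⟨i, by omega⟩} : ℕ) /
        (Nat.choose (N - 1) (n - 1) : ℝ))
      Filter.atTop
      (nhds ((Nat.factorial n : ℝ) / ∏ j ∈ Finset.Icc 2 n, ((Nat.fib (j + 2) : ℝ) - 1))) := by
  obtain ⟨m, rfl⟩ : ∃ m, n = m + 3 := ⟨n - 3, by omega⟩
  set w : Fin (m + 2) → ℕ := fun k => Nat.fib (k.val + 4) - 1 with hwdef
  have hw1 : ∀ k, 1 ≤ w k := by
    intro k
    have h2 : 2 ≤ Nat.fib (k.val + 4) := by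
      calc 2 = Nat.fib 3 := rfl
        _ ≤ Nat.fib (k.val + 4) := Nat.fib_mono (by omega)
    simp only [hwdef]
    omega
  set W : ℕ := ∏ k, w k with hWdef
  set v : ℕ := Nat.fib (m + 5) - 1 with hvdef
  set s : ℕ := ∑ k, (w k - 1) with hsdef
  have hW0 : 0 < W := by
    rw [hWdef]
    exact Finset.prod_pos fun k _ => hw1 k
  have hfac0 : (0 : ℝ) < ((m + 3).factorial : ℝ) := by positivity
  -- the real product identity
  have hWR : ((W : ℕ) : ℝ) = ∏ j ∈ Finset.Icc 2 (m + 3), ((Nat.fib (j + 2) : ℝ) - 1) := by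
    have h1 : ((W : ℕ) : ℝ) = ∏ k : Fin (m + 2), ((Nat.fib (k.val + 4) : ℝ) - 1) := by
      rw [hWdef, Nat.cast_prod]
      refine Finset.prod_congr rfl fun k _ => ?_
      have : 1 ≤ Nat.fib (k.val + 4) := Nat.fib_pos.2 (by omega)
      simp only [hwdef]
      rw [Nat.cast_sub this]
      simp
    rw [h1, Fin.prod_univ_eq_prod_range (fun i => ((Nat.fib (i + 4) : ℝ) - 1)) (m + 2)]
    have h2 : Finset.Icc 2 (m + 3) = Finset.Ico 2 (m + 4) := by
      rw [← Finset.Ico_add_one_right_eq_Icc]; rfl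
    rw [h2, Finset.prod_Ico_eq_prod_range]
    refine (Finset.prod_congr (by rw [show m + 4 - 2 = m + 2 from by omega]) fun i _ => ?_).symm
    have : 2 + i + 2 = i + 4 := by omega
    rw [this]
  -- limit of the bounding functions
  have hbound : ∀ d : ℕ, Tendsto (fun N : ℕ =>
      ((m + 3).factorial : ℝ) * ((N - v + d).choose (m + 2) : ℝ)
        / ((W : ℝ) * (((N - 1).choose (m + 2) : ℕ) : ℝ))) atTop
      (nhds (((m + 3).factorial : ℝ) / ∏ j ∈ Finset.Icc 2 (m + 3), ((Nat.fib (j + 2) : ℝ) - 1))) := by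
    intro d
    have h1 := (tendsto_choose_ratio (m + 2) v d).const_mul
      (((m + 3).factorial : ℝ) / (W : ℝ))
    rw [mul_one] at h1
    have h2 : (((m + 3).factorial : ℝ) / (W : ℝ))
        = ((m + 3).factorial : ℝ) / ∏ j ∈ Finset.Icc 2 (m + 3), ((Nat.fib (j + 2) : ℝ) - 1) := by
      rw [hWR]
    rw [h2] at h1
    refine Tendsto.congr (fun N => ?_) h1
    rw [← hWR, _root_.div_mul_div_comm]
  -- eventual bounds on the count
  have hcount : ∀ N : ℕ, v ≤ N →
      ((N - v) + (m + 2)).choose (m + 2)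
        ≤ (Set.ncard {a : Fin (m + 3) → ℕ | (∀ i, 1 ≤ a i) ∧
            (∀ i j : Fin (m + 3), i ≤ j → a j ≤ a i) ∧ (∑ i, a i) = N ∧
            ∀ i : ℕ, ∀ h : i + 2 < m + 3,
              a ⟨i + 1, by omega⟩ + a ⟨i + 2, by omega⟩ ≤ a ⟨i, by omega⟩}) * W
      ∧ (Set.ncard {a : Fin (m + 3) → ℕ | (∀ i, 1 ≤ a i) ∧
            (∀ i j : Fin (m + 3), i ≤ j → a j ≤ a i) ∧ (∑ i, a i) = N ∧
            ∀ i : ℕ, ∀ h : i + 2 < m + 3,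
              a ⟨i + 1, by omega⟩ + a ⟨i + 2, by omega⟩ ≤ a ⟨i, by omega⟩}) * W
        ≤ ((N - v) + s + (m + 2)).choose (m + 2) := by
    intro N hN
    have e1 := (ncard_A_eq (show 3 ≤ m + 3 by omega) N).trans (ncard_S_eq m N hN)
    rw [e1]
    exact ⟨simplexF_lower hw1, simplexF_upper hw1⟩
  -- squeeze
  refine tendsto_of_tendsto_of_tendsto_of_le_of_le' (hbound (m + 2)) (hbound (s + (m + 2)))
    ?_ ?_
  · filter_upwards [eventually_ge_atTop (v + m + 4)] with N hN
    have hNv : v ≤ N := by omega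
    have hC : 0 < (N - 1).choose (m + 2) := Nat.choose_pos (by omega)
    have hCpos : (0 : ℝ) < (((N - 1).choose (m + 2) : ℕ) : ℝ) := by exact_mod_cast hC
    have hWpos : (0 : ℝ) < ((W : ℕ) : ℝ) := by exact_mod_cast hW0
    obtain ⟨hlo, _⟩ := hcount N hNv
    have hlo' := (Nat.cast_le (α := ℝ)).2 hlo
    push_cast at hlo'
    have hred : m + 3 - 1 = m + 2 := rfl
    rw [hred]
    rw [div_le_div_iff₀ (by positivity) (by positivity)]
    nlinarith [mul_le_mul_of_nonneg_left hlo'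
      (le_of_lt (mul_pos hfac0 hCpos))]
  · filter_upwards [eventually_ge_atTop (v + m + 4)] with N hN
    have hNv : v ≤ N := by omega
    have hC : 0 < (N - 1).choose (m + 2) := Nat.choose_pos (by omega)
    have hCpos : (0 : ℝ) < (((N - 1).choose (m + 2) : ℕ) : ℝ) := by exact_mod_cast hC
    have hWpos : (0 : ℝ) < ((W : ℕ) : ℝ) := by exact_mod_cast hW0
    obtain ⟨_, hhi⟩ := hcount N hNv
    have hhi' := (Nat.cast_le (α := ℝ)).2 hhi
    push_cast at hhi'
    have hred : m + 3 - 1 = m + 2 := rfl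
    rw [hred]
    rw [show N - v + (s + (m + 2)) = N - v + s + (m + 2) from (Nat.add_assoc _ _ _).symm]
    rw [div_le_div_iff₀ (by positivity) (by positivity)]
    nlinarith [mul_le_mul_of_nonneg_left hhi'
      (le_of_lt (mul_pos hfac0 hCpos))]
end

section
/- lim_{N→∞} 120 · p_4(N, 5) / C(N-1, 4) = 15/88, where p_4(N, 5) is the number of 5-tuples (a_1,…,a_5) of positive integers with a_1 ≥ ⋯ ≥ a_5, sum N, a_1 ≥ a_2 + a_3 + a_4 and a_2 ≥ a_3 + a_4 + a_5. -/
open Filter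

/-! Auxiliary definitions -/

def Sset (M : ℕ) : Set (Fin 4 → ℕ) := {v | 2*v 0 + 4*v 1 + 8*v 2 + 11*v 3 ≤ M}
def Lb (M : ℕ) : Set (Fin 4 → ℕ) := {w | 2*(w 0/2) + 4*(w 1/4) + 8*(w 2/8) + 11*(w 3/11) ≤ M}

def Aset (N : ℕ) : Set (Fin 5 → ℕ) :=
  {a : Fin 5 → ℕ | (∀ i, 1 ≤ a i) ∧
    (∀ i j : Fin 5, i ≤ j → a j ≤ a i) ∧ (∑ i, a i) = N ∧
    a 1 + a 2 + a 3 ≤ a 0 ∧ a 2 + a 3 + a 4 ≤ a 1}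

def fA : (Fin 5 → ℕ) → (Fin 4 → ℕ) :=
  fun a => ![a 1 - (a 2 + a 3 + a 4), a 2 - a 3, a 3 - a 4, a 4 - 1]

/-! Stars and bars -/

lemma card_sum_eq (d t : ℕ) :
    Nat.card {x : Fin d → ℕ // ∑ i, x i = t} = (d + t - 1).choose t := by
  have e : {x : Fin d → ℕ // ∑ i, x i = t} ≃ Sym (Fin d) t := by
    refine Equiv.subtypeEquiv
      (Finsupp.equivFunOnFinite.symm.trans Multiset.toFinsupp.symm.toEquiv) ?_
    intro x
    have : (Multiset.toFinsupp.symm.toEquiv (Finsupp.equivFunOnFinite.symm x)) =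
        Finsupp.toMultiset (Finsupp.equivFunOnFinite.symm x) := rfl
    simp only [Equiv.trans_apply, this, Finsupp.card_toMultiset]
    rw [Finsupp.sum_fintype]
    · simp
    · simp
  rw [Nat.card_congr e, Nat.card_eq_fintype_card, Sym.card_sym_fin_eq_multichoose,
    Nat.multichoose_eq]

def eL (K : ℕ) : ↥{w : Fin 4 → ℕ | w 0 + w 1 + w 2 + w 3 ≤ K} ≃
    {x : Fin 5 → ℕ // ∑ i, x i = K} where
  toFun w := ⟨Fin.cons (K - (w.1 0 + w.1 1 + w.1 2 + w.1 3)) w.1, by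
    have hw : w.1 0 + w.1 1 + w.1 2 + w.1 3 ≤ K := w.2
    rw [Fin.sum_univ_succ]
    simp [Fin.sum_univ_four]
    omega⟩
  invFun x := ⟨fun i => x.1 i.succ, by
    have hx := x.2
    rw [Fin.sum_univ_succ, Fin.sum_univ_four] at hx
    simp only [Set.mem_setOf_eq]
    simp at hx ⊢
    omega⟩
  left_inv w := by
    ext i
    simp
  right_inv x := by
    have hx := x.2
    ext i
    refine Fin.cases ?_ ?_ i
    · simp only [Fin.cons_zero]
      rw [Fin.sum_univ_succ, Fin.sum_univ_four] at hx
      simp at hx ⊢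
      omega
    · intro j; simp

lemma ncard_L (K : ℕ) :
    ({w : Fin 4 → ℕ | w 0 + w 1 + w 2 + w 3 ≤ K}).ncard = (K + 4).choose 4 := by
  rw [← Nat.card_coe_set_eq]
  rw [Nat.card_congr (eL K), card_sum_eq]
  have h5 : 5 + K - 1 = K + 4 := by omega
  rw [h5, show (K+4).choose K = (K+4).choose 4 by
    conv_lhs => rw [show K = K + 4 - 4 by omega]
    exact Nat.choose_symm (by omega)]

/-! The blocking equivalence -/

def eP (M : ℕ) : ↥(Lb M) ≃ ↥(Sset M) × (Fin 2 × Fin 4 × Fin 8 × Fin 11) where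
  toFun w := (⟨![w.1 0/2, w.1 1/4, w.1 2/8, w.1 3/11], by
      have hw : 2*(w.1 0/2) + 4*(w.1 1/4) + 8*(w.1 2/8) + 11*(w.1 3/11) ≤ M := w.2
      simp only [Sset, Set.mem_setOf_eq]
      simpa using hw⟩,
    (⟨w.1 0 % 2, by omega⟩, ⟨w.1 1 % 4, by omega⟩, ⟨w.1 2 % 8, by omega⟩,
      ⟨w.1 3 % 11, by omega⟩))
  invFun p := ⟨![2*p.1.1 0 + p.2.1, 4*p.1.1 1 + p.2.2.1, 8*p.1.1 2 + p.2.2.2.1,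
      11*p.1.1 3 + p.2.2.2.2], by
    have hv : 2*p.1.1 0 + 4*p.1.1 1 + 8*p.1.1 2 + 11*p.1.1 3 ≤ M := p.1.2
    have h1 : (p.2.1 : ℕ) < 2 := p.2.1.isLt
    have h2 : (p.2.2.1 : ℕ) < 4 := p.2.2.1.isLt
    have h3 : (p.2.2.2.1 : ℕ) < 8 := p.2.2.2.1.isLt
    have h4 : (p.2.2.2.2 : ℕ) < 11 := p.2.2.2.2.isLt
    simp only [Lb, Set.mem_setOf_eq]
    simp
    omega⟩
  left_inv w := by
    apply Subtype.ext
    funext i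
    fin_cases i <;> simp <;> omega
  right_inv p := by
    rcases p with ⟨⟨v, hv⟩, ⟨i, j, k, l⟩⟩
    have h1 : (i : ℕ) < 2 := i.isLt
    have h2 : (j : ℕ) < 4 := j.isLt
    have h3 : (k : ℕ) < 8 := k.isLt
    have h4 : (l : ℕ) < 11 := l.isLt
    refine Prod.ext ?_ ?_
    · apply Subtype.ext
      funext m
      fin_cases m <;> simp <;> omega
    · refine Prod.ext ?_ (Prod.ext ?_ (Prod.ext ?_ ?_)) <;>
        · apply Fin.ext
          simp
          all_goals omega

lemma ncard_Lb (M : ℕ) : (Lb M).ncard = 704 * (Sset M).ncard := by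
  rw [← Nat.card_coe_set_eq, ← Nat.card_coe_set_eq]
  rw [Nat.card_congr (eP M), Nat.card_prod]
  have : Nat.card (Fin 2 × Fin 4 × Fin 8 × Fin 11) = 704 := by
    simp [Nat.card_prod]
  rw [this, mul_comm]

/-! Sandwiching the count -/

lemma finite_bdd {B : ℕ} (s : Set (Fin 4 → ℕ)) (h : ∀ w ∈ s, ∀ i, w i ≤ B) :
    s.Finite := by
  have : s ⊆ Set.pi Set.univ (fun _ : Fin 4 => Set.Iic B) := by
    intro w hw i _
    exact h w hw i
  exact (Set.Finite.pi fun i => Set.finite_Iic B).subset this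

lemma Lb_finite (M : ℕ) : (Lb M).Finite := by
  apply finite_bdd (B := M + 21)
  intro w hw i
  have : 2*(w 0/2) + 4*(w 1/4) + 8*(w 2/8) + 11*(w 3/11) ≤ M := hw
  fin_cases i <;> simp <;> omega

lemma L_finite (K : ℕ) : ({w : Fin 4 → ℕ | w 0 + w 1 + w 2 + w 3 ≤ K}).Finite := by
  apply finite_bdd (B := K)
  intro w hw i
  have : w 0 + w 1 + w 2 + w 3 ≤ K := hw
  fin_cases i <;> simp <;> omega

lemma lower_bound (M : ℕ) : (M + 4).choose 4 ≤ 704 * (Sset M).ncard := by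
  rw [← ncard_L, ← ncard_Lb]
  apply Set.ncard_le_ncard _ (Lb_finite M)
  intro w hw
  have : w 0 + w 1 + w 2 + w 3 ≤ M := hw
  show 2*(w 0/2) + 4*(w 1/4) + 8*(w 2/8) + 11*(w 3/11) ≤ M
  omega

lemma upper_bound (M : ℕ) : 704 * (Sset M).ncard ≤ (M + 25).choose 4 := by
  rw [← ncard_Lb, show M + 25 = (M + 21) + 4 by omega, ← ncard_L]
  apply Set.ncard_le_ncard _ (L_finite (M + 21))
  intro w hw
  have : 2*(w 0/2) + 4*(w 1/4) + 8*(w 2/8) + 11*(w 3/11) ≤ M := hw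
  show w 0 + w 1 + w 2 + w 3 ≤ M + 21
  omega

/-! The main bijection -/

lemma bijA (N : ℕ) (hN : 11 ≤ N) : Set.BijOn fA (Aset N) (Sset (N - 11)) := by
  refine ⟨?_, ?_, ?_⟩
  · rintro a ⟨hpos, hmono, hsum, hc1, hc2⟩
    have h4 : 1 ≤ a 4 := hpos 4
    have m23 : a 3 ≤ a 2 := hmono 2 3 (by decide)
    have m34 : a 4 ≤ a 3 := hmono 3 4 (by decide)
    rw [Fin.sum_univ_five] at hsum
    show 2 * (fA a 0) + 4 * (fA a 1) + 8 * (fA a 2) + 11 * (fA a 3) ≤ N - 11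
    simp only [fA, Matrix.cons_val_zero, Matrix.cons_val_one, Matrix.head_cons,
      Matrix.cons_val_two, Matrix.tail_cons, Matrix.cons_val_three]
    omega
  · rintro a ⟨hpos, hmono, hsum, hc1, hc2⟩ a' ⟨hpos', hmono', hsum', hc1', hc2'⟩ h
    have h4 : 1 ≤ a 4 := hpos 4
    have m23 : a 3 ≤ a 2 := hmono 2 3 (by decide)
    have m34 : a 4 ≤ a 3 := hmono 3 4 (by decide)
    have h4' : 1 ≤ a' 4 := hpos' 4
    have m23' : a' 3 ≤ a' 2 := hmono' 2 3 (by decide)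
    have m34' : a' 4 ≤ a' 3 := hmono' 3 4 (by decide)
    rw [Fin.sum_univ_five] at hsum hsum'
    have e0 := congrFun h 0
    have e1 := congrFun h 1
    have e2 := congrFun h 2
    have e3 := congrFun h 3
    simp only [fA, Matrix.cons_val_zero, Matrix.cons_val_one, Matrix.head_cons,
      Matrix.cons_val_two, Matrix.tail_cons, Matrix.cons_val_three] at e0 e1 e2 e3
    have q4 : a 4 = a' 4 := by omega
    have q3 : a 3 = a' 3 := by omega
    have q2 : a 2 = a' 2 := by omega
    have q1 : a 1 = a' 1 := by omega
    have q0 : a 0 = a' 0 := by omega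
    funext i
    fin_cases i
    · exact q0
    · exact q1
    · exact q2
    · exact q3
    · exact q4
  · intro v hv
    have hv' : 2 * v 0 + 4 * v 1 + 8 * v 2 + 11 * v 3 ≤ N - 11 := hv
    set b := v 0
    set c := v 1
    set d := v 2
    set e := v 3 + 1
    set f := (N - 11) - (2*v 0 + 4*v 1 + 8*v 2 + 11*v 3) with hf
    refine ⟨![5*e+4*d+2*c+b+f, 3*e+2*d+c+b, e+d+c, e+d, e], ⟨?_, ?_, ?_, ?_, ?_⟩, ?_⟩
    · intro i; fin_cases i <;> simp <;> omega
    · intro i j hij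
      fin_cases i <;> fin_cases j <;> simp_all <;> omega
    · rw [Fin.sum_univ_five]
      simp
      omega
    · simp; omega
    · simp; omega
    · funext i
      fin_cases i <;> simp [fA] <;> omega

/-! Binomial coefficient asymptotics -/

lemma choose4 (m : ℕ) : 24 * ((m+4).choose 4) = (m+1)*(m+2)*(m+3)*(m+4) := by
  have h := Nat.descFactorial_eq_factorial_mul_choose (m+4) 4
  norm_num [Nat.factorial] at h
  rw [← h]
  simp [Nat.descFactorial_succ, Nat.descFactorial_zero]
  ring

lemma choose4R (m : ℕ) :
    (((m+4).choose 4 : ℕ) : ℝ) = ((m:ℝ)+1)*((m:ℝ)+2)*((m:ℝ)+3)*((m:ℝ)+4)/24 := by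
  have h := choose4 m
  have h' : (24:ℝ) * ((m+4).choose 4 : ℕ) = ((m:ℝ)+1)*((m:ℝ)+2)*((m:ℝ)+3)*((m:ℝ)+4) := by
    exact_mod_cast congrArg (Nat.cast (R := ℝ)) h
  linarith

lemma tendsto_ratio (a b : ℝ) :
    Tendsto (fun n : ℕ => ((n:ℝ) + a)/((n:ℝ) + b)) atTop (nhds 1) := by
  have h1 : Tendsto (fun n : ℕ => (n:ℝ) + b) atTop atTop :=
    tendsto_atTop_add_const_right _ b tendsto_natCast_atTop_atTop
  have h2 : Tendsto (fun n : ℕ => (a - b)/((n:ℝ)+b)) atTop (nhds 0) :=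
    Tendsto.div_atTop tendsto_const_nhds h1
  have h3 : Tendsto (fun n : ℕ => 1 + (a - b)/((n:ℝ)+b)) atTop (nhds 1) := by
    simpa using tendsto_const_nhds.add h2
  refine h3.congr' ?_
  filter_upwards [h1.eventually_gt_atTop 0] with n hn
  have hne : (n:ℝ) + b ≠ 0 := ne_of_gt hn
  field_simp
  ring

lemma tendsto_low :
    Tendsto (fun N : ℕ => (((N-7).choose 4 : ℕ) : ℝ) / (((N-1).choose 4 : ℕ) : ℝ))
      atTop (nhds 1) := by
  have h : Tendsto (fun N : ℕ =>
      (((N:ℝ) + (-10))/((N:ℝ) + (-4))) * (((N:ℝ) + (-9))/((N:ℝ) + (-3))) *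
      (((N:ℝ) + (-8))/((N:ℝ) + (-2))) * (((N:ℝ) + (-7))/((N:ℝ) + (-1))))
      atTop (nhds 1) := by
    have := (((tendsto_ratio (-10) (-4)).mul (tendsto_ratio (-9) (-3))).mul
      (tendsto_ratio (-8) (-2))).mul (tendsto_ratio (-7) (-1))
    simpa using this
  refine h.congr' ?_
  filter_upwards [eventually_ge_atTop 11] with N hN
  have h7 : N - 7 = (N - 11) + 4 := by omega
  have h1 : N - 1 = (N - 5) + 4 := by omega
  rw [h7, h1, choose4R, choose4R]
  have c11 : ((N - 11 : ℕ) : ℝ) = (N:ℝ) - 11 := by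
    push_cast [Nat.cast_sub (by omega : 11 ≤ N)]; ring
  have c5 : ((N - 5 : ℕ) : ℝ) = (N:ℝ) - 5 := by
    push_cast [Nat.cast_sub (by omega : 5 ≤ N)]; ring
  rw [c11, c5]
  rw [div_mul_div_comm, div_mul_div_comm, div_mul_div_comm, div_div_div_comm]
  norm_num
  congr 1 <;> ring

lemma tendsto_high :
    Tendsto (fun N : ℕ => (((N+14).choose 4 : ℕ) : ℝ) / (((N-1).choose 4 : ℕ) : ℝ))
      atTop (nhds 1) := by
  have h : Tendsto (fun N : ℕ =>
      (((N:ℝ) + 11)/((N:ℝ) + (-4))) * (((N:ℝ) + 12)/((N:ℝ) + (-3))) *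
      (((N:ℝ) + 13)/((N:ℝ) + (-2))) * (((N:ℝ) + 14)/((N:ℝ) + (-1))))
      atTop (nhds 1) := by
    have := (((tendsto_ratio 11 (-4)).mul (tendsto_ratio 12 (-3))).mul
      (tendsto_ratio 13 (-2))).mul (tendsto_ratio 14 (-1))
    simpa using this
  refine h.congr' ?_
  filter_upwards [eventually_ge_atTop 11] with N hN
  have h14 : N + 14 = (N + 10) + 4 := by omega
  have h1 : N - 1 = (N - 5) + 4 := by omega
  rw [h14, h1, choose4R, choose4R]
  have c10 : ((N + 10 : ℕ) : ℝ) = (N:ℝ) + 10 := by push_cast; ring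
  have c5 : ((N - 5 : ℕ) : ℝ) = (N:ℝ) - 5 := by
    push_cast [Nat.cast_sub (by omega : 5 ≤ N)]; ring
  rw [c10, c5]
  rw [div_mul_div_comm, div_mul_div_comm, div_mul_div_comm, div_div_div_comm]
  norm_num
  congr 1 <;> ring

/-! Main theorem -/

theorem prob_no_quadrilateral_five_pieces :
    Filter.Tendsto (fun N : ℕ =>
      (120 : ℝ) * (Set.ncard {a : Fin 5 → ℕ | (∀ i, 1 ≤ a i) ∧
          (∀ i j : Fin 5, i ≤ j → a j ≤ a i) ∧ (∑ i, a i) = N ∧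
          a 1 + a 2 + a 3 ≤ a 0 ∧ a 2 + a 3 + a 4 ≤ a 1} : ℕ) /
        (Nat.choose (N - 1) 4 : ℝ))
      Filter.atTop (nhds (15 / 88)) := by
  have hg : Tendsto (fun N : ℕ =>
      (15/88 : ℝ) * ((((N-7).choose 4 : ℕ) : ℝ) / (((N-1).choose 4 : ℕ) : ℝ)))
      atTop (nhds (15/88)) := by
    simpa using tendsto_low.const_mul (15/88 : ℝ)
  have hh : Tendsto (fun N : ℕ =>
      (15/88 : ℝ) * ((((N+14).choose 4 : ℕ) : ℝ) / (((N-1).choose 4 : ℕ) : ℝ)))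
      atTop (nhds (15/88)) := by
    simpa using tendsto_high.const_mul (15/88 : ℝ)
  refine tendsto_of_tendsto_of_tendsto_of_le_of_le' hg hh ?_ ?_
  · filter_upwards [eventually_ge_atTop 11] with N hN
    have hb := bijA N hN
    have hcard : (Aset N).ncard = (Sset (N - 11)).ncard := by
      rw [← hb.image_eq, Set.ncard_image_of_injOn hb.injOn]
    have hl : (N - 7).choose 4 ≤ 704 * (Sset (N - 11)).ncard := by
      have := lower_bound (N - 11)
      rwa [show N - 11 + 4 = N - 7 by omega] at this
    have hC : (0:ℝ) < (((N-1).choose 4 : ℕ) : ℝ) := by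
      exact_mod_cast Nat.choose_pos (by omega : 4 ≤ N - 1)
    show (15/88 : ℝ) * _ ≤ (120 : ℝ) * ((Aset N).ncard : ℕ) / _
    rw [hcard, ← mul_div_assoc]
    have hlR : (((N - 7).choose 4 : ℕ) : ℝ) ≤ 704 * ((Sset (N - 11)).ncard : ℕ) := by
      exact_mod_cast hl
    rw [div_le_div_iff_of_pos_right hC]
    linarith
  · filter_upwards [eventually_ge_atTop 11] with N hN
    have hb := bijA N hN
    have hcard : (Aset N).ncard = (Sset (N - 11)).ncard := by
      rw [← hb.image_eq, Set.ncard_image_of_injOn hb.injOn]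
    have hu : 704 * (Sset (N - 11)).ncard ≤ (N + 14).choose 4 := by
      have := upper_bound (N - 11)
      rwa [show N - 11 + 25 = N + 14 by omega] at this
    have hC : (0:ℝ) < (((N-1).choose 4 : ℕ) : ℝ) := by
      exact_mod_cast Nat.choose_pos (by omega : 4 ≤ N - 1)
    show (120 : ℝ) * ((Aset N).ncard : ℕ) / _ ≤ (15/88 : ℝ) * _
    rw [hcard, ← mul_div_assoc]
    have huR : 704 * (((Sset (N - 11)).ncard : ℕ) : ℝ) ≤ ((N + 14).choose 4 : ℕ) := by
      exact_mod_cast hu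
    rw [div_le_div_iff_of_pos_right hC]
    linarith
end

section
/- lim_{N→∞} 720 · p_4(N, 6) / C(N-1, 5) = 3/80, where p_4(N, 6) counts 6-tuples (a_1,…,a_6) of positive integers with a_1 ≥ ⋯ ≥ a_6, sum N, and a_i ≥ a_{i+1} + a_{i+2} + a_{i+3} for i = 1, 2, 3. -/
open Finset

/-- Finset of `k`-tuples of naturals with sum at most `M`. -/
def simC (k M : ℕ) : Finset (Fin k → ℕ) :=
  (Fintype.piFinset fun _ => Finset.range (M+1)).filter (fun z => ∑ i, z i ≤ M)

lemma mem_simC {k M : ℕ} {z : Fin k → ℕ} : z ∈ simC k M ↔ ∑ i, z i ≤ M := by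
  simp only [simC, mem_filter, Fintype.mem_piFinset, mem_range, Nat.lt_succ_iff]
  constructor
  · tauto
  · intro h
    refine ⟨fun i => le_trans ?_ h, h⟩
    exact Finset.single_le_sum (f := fun i => z i) (fun _ _ => Nat.zero_le _) (mem_univ i)

lemma sum_choose_aux (k M : ℕ) :
    ∑ t ∈ Finset.range (M+1), (M - t + k).choose k = (M + (k+1)).choose (k+1) := by
  have h2 := Finset.sum_range_reflect (fun j => (j + k).choose k) (M+1)
  have h3 : ∑ t ∈ Finset.range (M+1), (M - t + k).choose k
      = ∑ j ∈ Finset.range (M+1), ((M + 1 - 1 - j) + k).choose k := by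
    refine Finset.sum_congr rfl (fun t ht => ?_)
    rw [mem_range, Nat.lt_succ_iff] at ht
    congr 2
  have h4 : ∑ j ∈ Finset.range (M+1), (j + k).choose k
      = ∑ m ∈ Finset.Icc k (M + k), m.choose k := by
    refine Finset.sum_nbij' (fun j => j + k) (fun m => m - k) ?_ ?_ ?_ ?_ ?_
    · intro j hj; rw [mem_range, Nat.lt_succ_iff] at hj; rw [Finset.mem_Icc]; omega
    · intro m hm; rw [Finset.mem_Icc] at hm; rw [mem_range]; omega
    · intro j _; omega
    · intro m hm; rw [Finset.mem_Icc] at hm; omega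
    · intro j _; rfl
  rw [h3, h2, h4, Nat.sum_Icc_choose]
  rfl

lemma card_simC (k M : ℕ) : (simC k M).card = (M + k).choose k := by
  induction k generalizing M with
  | zero => simp [simC]
  | succ k ih =>
    have hfib : ∀ t ∈ Finset.range (M+1),
        ((simC (k+1) M).filter (fun z => z 0 = t)).card = (simC k (M - t)).card := by
      intro t ht
      rw [mem_range, Nat.lt_succ_iff] at ht
      refine Finset.card_bij (fun z _ => Fin.tail z) ?_ ?_ ?_
      · intro z hz
        obtain ⟨hz1, hz2⟩ := Finset.mem_filter.mp hz
        rw [mem_simC] at hz1 ⊢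
        rw [Fin.sum_univ_succ, hz2] at hz1
        show ∑ i : Fin k, z i.succ ≤ M - t
        omega
      · intro z hz w hw h
        obtain ⟨_, hz2⟩ := Finset.mem_filter.mp hz
        obtain ⟨_, hw2⟩ := Finset.mem_filter.mp hw
        have h5 : Fin.cons (z 0) (Fin.tail z) = Fin.cons (w 0) (Fin.tail w) := by
          rw [hz2, hw2]
          exact congrArg _ h
        rwa [Fin.cons_self_tail, Fin.cons_self_tail] at h5
      · intro y hy
        rw [mem_simC] at hy
        refine ⟨Fin.cons t y, Finset.mem_filter.mpr ⟨?_, ?_⟩, ?_⟩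
        · rw [mem_simC, Fin.sum_univ_succ, Fin.cons_zero]
          have h2 : ∑ i : Fin k, (Fin.cons t y : Fin (k+1) → ℕ) i.succ = ∑ i : Fin k, y i := by
            refine Finset.sum_congr rfl (fun i _ => ?_); rw [Fin.cons_succ]
          rw [h2]
          omega
        · exact Fin.cons_zero _ _
        · simp [Fin.tail_cons]
    rw [Finset.card_eq_sum_card_fiberwise (f := fun z => z 0) (t := Finset.range (M+1))
        (fun z hz => by
          rw [Finset.mem_coe, mem_simC] at hz
          rw [Finset.mem_coe, mem_range, Nat.lt_succ_iff]
          exact le_trans (Finset.single_le_sum (f := fun i => z i)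
            (fun _ _ => Nat.zero_le _) (mem_univ 0)) hz),
      Finset.sum_congr rfl hfib,
      Finset.sum_congr rfl (fun t _ => ih (M - t)), sum_choose_aux]

/-- The weights. -/
def wts : Fin 5 → ℕ := ![2, 4, 8, 15, 20]

lemma wts_pos : ∀ i, 0 < wts i := by decide

/-- Weighted simplex. -/
def wtC (M : ℕ) : Finset (Fin 5 → ℕ) :=
  (Fintype.piFinset fun _ => Finset.range (M+1)).filter (fun y => ∑ i, wts i * y i ≤ M)

lemma mem_wtC {M : ℕ} {y : Fin 5 → ℕ} : y ∈ wtC M ↔ ∑ i, wts i * y i ≤ M := by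
  simp only [wtC, mem_filter, Fintype.mem_piFinset, mem_range, Nat.lt_succ_iff]
  constructor
  · tauto
  · intro h
    refine ⟨fun i => ?_, h⟩
    calc y i ≤ wts i * y i := Nat.le_mul_of_pos_left _ (wts_pos i)
    _ ≤ ∑ j, wts j * y j :=
      Finset.single_le_sum (f := fun j => wts j * y j) (fun _ _ => Nat.zero_le _) (mem_univ i)
    _ ≤ M := h

lemma prod_wts : ∏ i, wts i = 19200 := by decide

lemma wtC_lower (M : ℕ) : (M + 5).choose 5 ≤ 19200 * (wtC M).card := by
  rw [← card_simC 5 M]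
  calc (simC 5 M).card ≤ 19200 * ((simC 5 M).image (fun z i => z i / wts i)).card := by
        refine Finset.card_le_mul_card_image (f := fun z i => z i / wts i) (simC 5 M) 19200
          (fun y _ => ?_)
        calc ((simC 5 M).filter (fun z => (fun i => z i / wts i) = y)).card
            ≤ (Fintype.piFinset fun i => Finset.Ico (wts i * y i) (wts i * y i + wts i)).card := by
              refine Finset.card_le_card (fun z hz => ?_)
              obtain ⟨_, hz2⟩ := Finset.mem_filter.mp hz
              rw [Fintype.mem_piFinset]
              intro i
              have hyi : z i / wts i = y i := congrFun hz2 i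
              have e1 := Nat.div_add_mod (z i) (wts i)
              have e2 := Nat.mod_lt (z i) (wts_pos i)
              rw [hyi] at e1
              rw [Finset.mem_Ico]
              omega
          _ = 19200 := by
              rw [Fintype.card_piFinset]
              rw [← prod_wts]
              refine Finset.prod_congr rfl (fun i _ => ?_)
              rw [Nat.card_Ico]
              omega
    _ ≤ 19200 * (wtC M).card := by
        refine Nat.mul_le_mul_left _ (Finset.card_le_card (fun y hy => ?_))
        obtain ⟨z, hz, rfl⟩ := Finset.mem_image.mp hy
        rw [mem_simC] at hz
        rw [mem_wtC]
        calc ∑ i, wts i * (z i / wts i) ≤ ∑ i, z i :=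
              Finset.sum_le_sum (fun i _ => Nat.mul_div_le (z i) (wts i))
          _ ≤ M := hz

lemma wtC_upper (M : ℕ) : 19200 * (wtC M).card ≤ (M + 49).choose 5 := by
  have key : ((wtC M) ×ˢ (Fintype.piFinset fun i => Finset.range (wts i))).card
      ≤ (simC 5 (M + 44)).card := by
    refine Finset.card_le_card_of_injOn (fun p i => wts i * p.1 i + p.2 i) ?_ ?_
    · intro p hp
      rw [Finset.mem_coe, Finset.mem_product] at hp
      obtain ⟨h1, h2⟩ := hp
      rw [mem_wtC] at h1
      rw [Fintype.mem_piFinset] at h2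
      rw [Finset.mem_coe, mem_simC, Finset.sum_add_distrib]
      have h3 : ∑ i, p.2 i ≤ ∑ i : Fin 5, (wts i - 1) :=
        Finset.sum_le_sum (fun i _ => by
          have := h2 i; rw [Finset.mem_range] at this; omega)
      have h4 : ∑ i : Fin 5, (wts i - 1) = 44 := by decide
      omega
    · intro p hp q hq h
      rw [Finset.mem_coe, Finset.mem_product, Fintype.mem_piFinset] at hp hq
      have hcomp : ∀ i, wts i * p.1 i + p.2 i = wts i * q.1 i + q.2 i := fun i => congrFun h i
      have h1 : p.1 = q.1 := by
        funext i
        have e := hcomp i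
        have hp2 := hp.2 i
        have hq2 := hq.2 i
        rw [Finset.mem_range] at hp2 hq2
        have d1 : (wts i * p.1 i + p.2 i) / wts i = p.1 i := by
          rw [Nat.mul_add_div (wts_pos i), Nat.div_eq_of_lt hp2, Nat.add_zero]
        have d2 : (wts i * q.1 i + q.2 i) / wts i = q.1 i := by
          rw [Nat.mul_add_div (wts_pos i), Nat.div_eq_of_lt hq2, Nat.add_zero]
        rw [← d1, ← d2, e]
      have h2 : p.2 = q.2 := by
        funext i
        have e := hcomp i
        rw [h1] at e
        omega
      exact Prod.ext h1 h2
  rw [Finset.card_product, Fintype.card_piFinset] at key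
  simp only [Finset.card_range] at key
  rw [prod_wts, card_simC] at key
  calc 19200 * (wtC M).card = (wtC M).card * 19200 := Nat.mul_comm _ _
    _ ≤ (M + 44 + 5).choose 5 := key
    _ = (M + 49).choose 5 := by norm_num

lemma wt_sum (y : Fin 5 → ℕ) :
    ∑ i, wts i * y i = 2*y 0 + 4*y 1 + 8*y 2 + 15*y 3 + 20*y 4 := by
  simp [wts, Fin.sum_univ_five]

lemma funext6 {f g : Fin 6 → ℕ} (h0 : f 0 = g 0) (h1 : f 1 = g 1) (h2 : f 2 = g 2)
    (h3 : f 3 = g 3) (h4 : f 4 = g 4) (h5 : f 5 = g 5) : f = g := by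
  funext i
  fin_cases i
  · exact h0
  · exact h1
  · exact h2
  · exact h3
  · exact h4
  · exact h5

lemma funext5 {f g : Fin 5 → ℕ} (h0 : f 0 = g 0) (h1 : f 1 = g 1) (h2 : f 2 = g 2)
    (h3 : f 3 = g 3) (h4 : f 4 = g 4) : f = g := by
  funext i
  fin_cases i
  · exact h0
  · exact h1
  · exact h2
  · exact h3
  · exact h4

lemma antitone6 {f : Fin 6 → ℕ} (h01 : f 1 ≤ f 0) (h12 : f 2 ≤ f 1) (h23 : f 3 ≤ f 2)
    (h34 : f 4 ≤ f 3) (h45 : f 5 ≤ f 4) : ∀ i j : Fin 6, i ≤ j → f j ≤ f i := by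
  have hstep : ∀ m n : Fin 6, (n : ℕ) + 1 = (m : ℕ) → f m ≤ f n := by
    intro m n hmn
    fin_cases m <;> fin_cases n <;>
      first
      | exact h01
      | exact h12
      | exact h23
      | exact h34
      | exact h45
      | simp at hmn
  have main : ∀ d : ℕ, ∀ i j : Fin 6, (i : ℕ) + d = (j : ℕ) → f j ≤ f i := by
    intro d
    induction d with
    | zero =>
      intro i j hij
      have : i = j := Fin.ext (by omega)
      rw [this]
    | succ d ih =>
      intro i j hij
      have hj : 1 ≤ (j : ℕ) := by omega
      have hjlt : (j : ℕ) - 1 < 6 := by omega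
      refine le_trans (hstep j ⟨(j : ℕ) - 1, hjlt⟩ (by simp; omega)) ?_
      exact ih i ⟨(j : ℕ) - 1, hjlt⟩ (by simp; omega)
  intro i j hij
  exact main ((j : ℕ) - (i : ℕ)) i j (by have := (Fin.le_def).mp hij; omega)

/-- reconstruction map -/
def recon (N : ℕ) (y : Fin 5 → ℕ) : Fin 6 → ℕ := fun i =>
  match i with
  | ⟨0, _⟩ => 9 + 9*y 4 + 7*y 3 + 4*y 2 + 2*y 1 + y 0
      + (N - 20 - (2*y 0 + 4*y 1 + 8*y 2 + 15*y 3 + 20*y 4))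
  | ⟨1, _⟩ => 5 + 5*y 4 + 4*y 3 + 2*y 2 + y 1 + y 0
  | ⟨2, _⟩ => 3 + 3*y 4 + 2*y 3 + y 2 + y 1
  | ⟨3, _⟩ => 1 + y 4 + y 3 + y 2
  | ⟨4, _⟩ => 1 + y 4 + y 3
  | ⟨5, _⟩ => 1 + y 4

/-- inverse map -/
def deco (a : Fin 6 → ℕ) : Fin 5 → ℕ := fun i =>
  match i with
  | ⟨0, _⟩ => a 1 - (a 2 + a 3 + a 4)
  | ⟨1, _⟩ => a 2 - (a 3 + a 4 + a 5)
  | ⟨2, _⟩ => a 3 - a 4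
  | ⟨3, _⟩ => a 4 - a 5
  | ⟨4, _⟩ => a 5 - 1

lemma card_S (N : ℕ) (hN : 20 ≤ N) :
    Set.ncard {a : Fin 6 → ℕ | (∀ i, 1 ≤ a i) ∧
        (∀ i j : Fin 6, i ≤ j → a j ≤ a i) ∧ (∑ i, a i) = N ∧
        a 1 + a 2 + a 3 ≤ a 0 ∧ a 2 + a 3 + a 4 ≤ a 1 ∧ a 3 + a 4 + a 5 ≤ a 2}
      = (wtC (N - 20)).card := by
  have hset : {a : Fin 6 → ℕ | (∀ i, 1 ≤ a i) ∧
        (∀ i j : Fin 6, i ≤ j → a j ≤ a i) ∧ (∑ i, a i) = N ∧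
        a 1 + a 2 + a 3 ≤ a 0 ∧ a 2 + a 3 + a 4 ≤ a 1 ∧ a 3 + a 4 + a 5 ≤ a 2}
      = ↑((wtC (N - 20)).image (recon N)) := by
    ext a
    simp only [Set.mem_setOf_eq, Finset.coe_image, Set.mem_image, Finset.mem_coe]
    constructor
    · rintro ⟨h1, h2, h3, q1, q2, q3⟩
      have e10 := h1 0; have e11 := h1 1; have e12 := h1 2; have e13 := h1 3
      have e14 := h1 4; have e15 := h1 5
      have m01 := h2 0 1 (by decide); have m12 := h2 1 2 (by decide)
      have m23 := h2 2 3 (by decide); have m34 := h2 3 4 (by decide)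
      have m45 := h2 4 5 (by decide)
      rw [Fin.sum_univ_six] at h3
      have d0 : deco a 0 = a 1 - (a 2 + a 3 + a 4) := rfl
      have d1 : deco a 1 = a 2 - (a 3 + a 4 + a 5) := rfl
      have d2 : deco a 2 = a 3 - a 4 := rfl
      have d3 : deco a 3 = a 4 - a 5 := rfl
      have d4 : deco a 4 = a 5 - 1 := rfl
      refine ⟨deco a, ?_, ?_⟩
      · rw [mem_wtC, wt_sum, d0, d1, d2, d3, d4]
        omega
      · have r0 : recon N (deco a) 0 = 9 + 9*(deco a 4) + 7*(deco a 3) + 4*(deco a 2)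
            + 2*(deco a 1) + (deco a 0)
            + (N - 20 - (2*(deco a 0) + 4*(deco a 1) + 8*(deco a 2) + 15*(deco a 3)
                + 20*(deco a 4))) := rfl
        have r1 : recon N (deco a) 1 = 5 + 5*(deco a 4) + 4*(deco a 3) + 2*(deco a 2)
            + (deco a 1) + (deco a 0) := rfl
        have r2 : recon N (deco a) 2 = 3 + 3*(deco a 4) + 2*(deco a 3) + (deco a 2)
            + (deco a 1) := rfl
        have r3 : recon N (deco a) 3 = 1 + (deco a 4) + (deco a 3) + (deco a 2) := rfl
        have r4 : recon N (deco a) 4 = 1 + (deco a 4) + (deco a 3) := rfl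
        have r5 : recon N (deco a) 5 = 1 + (deco a 4) := rfl
        simp only [d0, d1, d2, d3, d4] at r0 r1 r2 r3 r4 r5
        refine funext6 ?_ ?_ ?_ ?_ ?_ ?_ <;> simp only [r0, r1, r2, r3, r4, r5] <;> omega
    · rintro ⟨y, hy, rfl⟩
      rw [mem_wtC, wt_sum] at hy
      have r0 : recon N y 0 = 9 + 9*y 4 + 7*y 3 + 4*y 2 + 2*y 1 + y 0
          + (N - 20 - (2*y 0 + 4*y 1 + 8*y 2 + 15*y 3 + 20*y 4)) := rfl
      have r1 : recon N y 1 = 5 + 5*y 4 + 4*y 3 + 2*y 2 + y 1 + y 0 := rfl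
      have r2 : recon N y 2 = 3 + 3*y 4 + 2*y 3 + y 2 + y 1 := rfl
      have r3 : recon N y 3 = 1 + y 4 + y 3 + y 2 := rfl
      have r4 : recon N y 4 = 1 + y 4 + y 3 := rfl
      have r5 : recon N y 5 = 1 + y 4 := rfl
      refine ⟨?_, ?_, ?_, ?_, ?_, ?_⟩
      · intro i
        have hcases : i = 0 ∨ i = 1 ∨ i = 2 ∨ i = 3 ∨ i = 4 ∨ i = 5 := by
          fin_cases i <;> simp
        rcases hcases with rfl | rfl | rfl | rfl | rfl | rfl <;>
          simp only [r0, r1, r2, r3, r4, r5] <;> omega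
      · refine antitone6 ?_ ?_ ?_ ?_ ?_ <;> simp only [r0, r1, r2, r3, r4, r5] <;> omega
      · rw [Fin.sum_univ_six]
        simp only [r0, r1, r2, r3, r4, r5]
        omega
      · simp only [r0, r1, r2, r3, r4, r5]; omega
      · simp only [r0, r1, r2, r3, r4, r5]; omega
      · simp only [r0, r1, r2, r3, r4, r5]; omega
  rw [hset, Set.ncard_coe_finset]
  refine Finset.card_image_of_injOn (fun y _ z _ h => ?_)
  have c1 := congrFun h 1
  have c2 := congrFun h 2
  have c3 := congrFun h 3
  have c4 := congrFun h 4
  have c5 := congrFun h 5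
  simp only [recon] at c1 c2 c3 c4 c5
  refine funext5 ?_ ?_ ?_ ?_ ?_ <;> omega

open Filter

lemma factor_tendsto (c d : ℝ) :
    Tendsto (fun n : ℕ => ((n:ℝ) + c) / ((n:ℝ) + d)) atTop (nhds 1) := by
  have hd : Tendsto (fun n : ℕ => (n:ℝ) + d) atTop atTop :=
    tendsto_atTop_add_const_right _ d tendsto_natCast_atTop_atTop
  have h0 : Tendsto (fun n : ℕ => 1 + (c - d) * ((n:ℝ) + d)⁻¹) atTop (nhds 1) := by
    have := (hd.inv_tendsto_atTop).const_mul (c - d)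
    have h1 := (tendsto_const_nhds : Tendsto (fun _ : ℕ => (1:ℝ)) atTop (nhds 1)).add this
    simpa using h1
  refine h0.congr' ?_
  filter_upwards [hd.eventually_gt_atTop 0] with n hn
  field_simp
  ring

lemma choose5_cast (n : ℕ) (hn : 5 ≤ n) :
    ((n.choose 5 : ℕ) : ℝ) = (∏ j ∈ Finset.range 5, ((n:ℝ) - j)) / 120 := by
  have h := Nat.descFactorial_eq_factorial_mul_choose n 5
  rw [Nat.descFactorial_eq_prod_range] at h
  have hc : (∏ j ∈ Finset.range 5, ((n - j : ℕ) : ℝ)) = 120 * ((n.choose 5 : ℕ) : ℝ) := by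
    rw [← Nat.cast_prod, h]
    push_cast
    norm_num [Nat.factorial]
  have hcast : ∀ j ∈ Finset.range 5, ((n - j : ℕ) : ℝ) = (n:ℝ) - j := by
    intro j hj
    rw [Finset.mem_range] at hj
    rw [Nat.cast_sub (by omega)]
  rw [Finset.prod_congr rfl hcast] at hc
  rw [hc]
  ring

lemma ratio_tendsto (a b : ℕ) :
    Tendsto (fun n : ℕ => (((n + a).choose 5 : ℕ) : ℝ) / (((n + b).choose 5 : ℕ) : ℝ))
      atTop (nhds 1) := by
  have key : Tendsto (fun n : ℕ => ∏ j ∈ Finset.range 5,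
      (((n:ℝ) + a - j) / ((n:ℝ) + b - j))) atTop (nhds 1) := by
    have h := tendsto_finset_prod (f := fun (j : ℕ) (n : ℕ) =>
        ((n:ℝ) + a - j) / ((n:ℝ) + b - j)) (x := atTop) (a := fun _ => (1:ℝ))
      (Finset.range 5) (fun j _ => by
        have := factor_tendsto ((a:ℝ) - j) ((b:ℝ) - j)
        refine this.congr (fun n => ?_)
        ring_nf)
    simpa using h
  refine key.congr' ?_
  filter_upwards [eventually_ge_atTop 5] with n hn
  rw [choose5_cast (n + a) (by omega), choose5_cast (n + b) (by omega)]
  rw [div_div_div_comm]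
  norm_num

theorem prob_no_quadrilateral_six_pieces :
    Filter.Tendsto (fun N : ℕ =>
      (720 : ℝ) * (Set.ncard {a : Fin 6 → ℕ | (∀ i, 1 ≤ a i) ∧
          (∀ i j : Fin 6, i ≤ j → a j ≤ a i) ∧ (∑ i, a i) = N ∧
          a 1 + a 2 + a 3 ≤ a 0 ∧ a 2 + a 3 + a 4 ≤ a 1 ∧ a 3 + a 4 + a 5 ≤ a 2} : ℕ) /
        (Nat.choose (N - 1) 5 : ℝ))
      Filter.atTop (nhds (3 / 80)) := by
  have hlow : Tendsto (fun N : ℕ => (3/80 : ℝ) *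
      ((((N - 20 + 5).choose 5 : ℕ) : ℝ) / (((N - 20 + 19).choose 5 : ℕ) : ℝ)))
      atTop (nhds (3/80)) := by
    have h1 := ((ratio_tendsto 5 19).comp (tendsto_sub_atTop_nat 20)).const_mul (3/80 : ℝ)
    rw [mul_one] at h1
    exact h1.congr (fun N => rfl)
  have hup : Tendsto (fun N : ℕ => (3/80 : ℝ) *
      ((((N - 20 + 49).choose 5 : ℕ) : ℝ) / (((N - 20 + 19).choose 5 : ℕ) : ℝ)))
      atTop (nhds (3/80)) := by
    have h1 := ((ratio_tendsto 49 19).comp (tendsto_sub_atTop_nat 20)).const_mul (3/80 : ℝ)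
    rw [mul_one] at h1
    exact h1.congr (fun N => rfl)
  refine tendsto_of_tendsto_of_tendsto_of_le_of_le' hlow hup ?_ ?_
  · filter_upwards [eventually_ge_atTop 21] with N hN
    have h19 : N - 20 + 19 = N - 1 := by omega
    rw [h19, card_S N (by omega)]
    have hQ : (0:ℝ) < (((N - 1).choose 5 : ℕ) : ℝ) := by
      exact_mod_cast Nat.choose_pos (by omega : 5 ≤ N - 1)
    calc (3/80 : ℝ) * ((((N - 20 + 5).choose 5 : ℕ) : ℝ) / (((N - 1).choose 5 : ℕ) : ℝ))
        = ((3/80 : ℝ) * (((N - 20 + 5).choose 5 : ℕ) : ℝ)) / (((N - 1).choose 5 : ℕ) : ℝ) := by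
          ring
      _ ≤ ((3/80 : ℝ) * ((19200 * (wtC (N - 20)).card : ℕ) : ℝ)) / (((N - 1).choose 5 : ℕ) : ℝ) := by
          gcongr
          exact_mod_cast wtC_lower (N - 20)
      _ = 720 * (((wtC (N - 20)).card : ℕ) : ℝ) / (((N - 1).choose 5 : ℕ) : ℝ) := by
          push_cast
          ring
  · filter_upwards [eventually_ge_atTop 21] with N hN
    have h19 : N - 20 + 19 = N - 1 := by omega
    rw [h19, card_S N (by omega)]
    have hQ : (0:ℝ) < (((N - 1).choose 5 : ℕ) : ℝ) := by
      exact_mod_cast Nat.choose_pos (by omega : 5 ≤ N - 1)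
    calc 720 * (((wtC (N - 20)).card : ℕ) : ℝ) / (((N - 1).choose 5 : ℕ) : ℝ)
        = ((3/80 : ℝ) * ((19200 * (wtC (N - 20)).card : ℕ) : ℝ)) / (((N - 1).choose 5 : ℕ) : ℝ) := by
          push_cast
          ring
      _ ≤ ((3/80 : ℝ) * (((N - 20 + 49).choose 5 : ℕ) : ℝ)) / (((N - 1).choose 5 : ℕ) : ℝ) := by
          gcongr
          exact_mod_cast wtC_upper (N - 20)
      _ = (3/80 : ℝ) * ((((N - 20 + 49).choose 5 : ℕ) : ℝ) / (((N - 1).choose 5 : ℕ) : ℝ)) := by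
          ring
end
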